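/- arXiv:2401.11072 — 5 statements merged into one kernel-verified Lean document; each statement's English description precedes it below -/
import Mathlib

section
/- Let k be an algebraically closed field of characteristic p > 0, and let A(n) = k[x_1,...,x_n]/(x_1^p,...,x_n^p) be the truncated polynomial ring. A k-algebra endomorphism φ of A(n) is an automorphism if and only if φ stabilizes the unique maximal ideal of A(n) and the determinant of the Jacobian matrix J(φ) = (∂_j φ(x_i)) is invertible in A(n). -/
open MvPolynomial

namespace Stmt0

variable {k : Type*} [Field k] {p n : ℕ} [hp : Fact p.Prime] [CharP k p]

set_option linter.unusedSectionVars false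
set_option synthInstance.maxHeartbeats 1000000
set_option maxHeartbeats 1000000

/-- degree of a monomial exponent -/
def deg (d : Fin n →₀ ℕ) : ℕ := d.sum fun _ e => e

lemma deg_add (u v : Fin n →₀ ℕ) : deg (u + v) = deg u + deg v :=
  Finsupp.sum_add_index' (fun _ => rfl) (fun _ _ _ => rfl)

lemma deg_eq_zero {d : Fin n →₀ ℕ} (h : deg d = 0) : d = 0 := by
  ext i
  by_cases hi : i ∈ d.support
  · have := Finset.sum_eq_zero_iff.mp h i hi
    simpa using this
  · simpa using Finsupp.notMem_support_iff.mp hi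

lemma le_deg {d : Fin n →₀ ℕ} {i : Fin n} : d i ≤ deg d := by
  by_cases hi : i ∈ d.support
  · exact Finset.single_le_sum (fun _ _ => Nat.zero_le _) hi
  · simp [Finsupp.notMem_support_iff.mp hi]

lemma deg_one {d : Fin n →₀ ℕ} (h : deg d = 1) : ∃ i, d = Finsupp.single i 1 := by
  have hd0 : d ≠ 0 := by rintro rfl; simp [deg] at h
  obtain ⟨i, hi⟩ : ∃ i, d i ≠ 0 := by
    by_contra hc
    push_neg at hc
    exact hd0 (Finsupp.ext hc)
  refine ⟨i, ?_⟩
  ext j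
  rcases eq_or_ne j i with rfl | hj
  · have h1 : 1 ≤ d j := Nat.one_le_iff_ne_zero.mpr hi
    have h2 : d j ≤ 1 := h ▸ le_deg
    simp [le_antisymm h2 h1]
  · rw [Finsupp.single_apply, if_neg (by exact fun hh => hj hh.symm)]
    by_contra hc
    have hsub : ({i, j} : Finset (Fin n)) ⊆ d.support := by
      intro x hx
      simp only [Finset.mem_insert, Finset.mem_singleton] at hx
      rcases hx with rfl | rfl
      · exact Finsupp.mem_support_iff.mpr hi
      · exact Finsupp.mem_support_iff.mpr hc
    have : d i + d j ≤ deg d := by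
      rw [← Finset.sum_pair (by exact fun hh => hj hh.symm : i ≠ j)]
      exact Finset.sum_le_sum_of_subset hsub
    omega

/-- the ideal generated by the variables -/
noncomputable def sX : Ideal (MvPolynomial (Fin n) k) := Ideal.span (Set.range X)

lemma mem_sX_iff {f : MvPolynomial (Fin n) k} : f ∈ (sX (k := k) (n := n)) ↔ constantCoeff f = 0 := by
  constructor
  · intro hf
    have : sX (k := k) (n := n) ≤ RingHom.ker (constantCoeff (σ := Fin n) (R := k)) := by
      rw [sX, Ideal.span_le]
      rintro _ ⟨i, rfl⟩
      simp [RingHom.mem_ker]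
    exact this hf
  · intro hf
    have : f ∈ Ideal.span (X '' (Set.univ : Set (Fin n)) : Set (MvPolynomial (Fin n) k)) := by
      rw [mem_ideal_span_X_image]
      intro m hm
      have hm0 : m ≠ 0 := by
        rintro rfl
        rw [mem_support_iff] at hm
        exact hm hf
      obtain ⟨i, hi⟩ : ∃ i, m i ≠ 0 := by
        by_contra hc; push_neg at hc; exact hm0 (Finsupp.ext hc)
      exact ⟨i, trivial, hi⟩
    rwa [Set.image_univ] at this

lemma deg_ge_of_mem_sX_pow : ∀ (q : ℕ) (f : MvPolynomial (Fin n) k), f ∈ (sX (k := k)) ^ q →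
    ∀ d ∈ f.support, q ≤ deg d := by
  intro q
  induction q with
  | zero => intro f _ d _; exact Nat.zero_le _
  | succ q ih =>
    intro f hf
    rw [pow_succ] at hf
    refine Submodule.mul_induction_on hf ?_ ?_
    · intro a ha b hb d hd
      classical
      have hd' := support_mul a b hd
      rw [Finset.mem_add] at hd'
      obtain ⟨u, hu, v, hv, rfl⟩ := hd'
      have h1 : q ≤ deg u := ih a ha u hu
      have h2 : 1 ≤ deg v := by
        have hb0 : constantCoeff b = 0 := mem_sX_iff.mp hb
        have : v ≠ 0 := by
          rintro rfl
          rw [mem_support_iff] at hv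
          exact hv hb0
        rcases Nat.eq_zero_or_pos (deg v) with h | h
        · exact absurd (deg_eq_zero h) this
        · exact h
      rw [deg_add]; omega
    · intro a b ha hb d hd
      have := MvPolynomial.support_add hd
      rw [Finset.mem_union] at this
      rcases this with h | h
      · exact ha d h
      · exact hb d h

lemma mem_sX_pow_of_deg_ge : ∀ (q : ℕ) (f : MvPolynomial (Fin n) k),
    (∀ d ∈ f.support, q ≤ deg d) → f ∈ (sX (k := k)) ^ q := by
  intro q
  induction q with
  | zero => intro f _; simp
  | succ q ih =>
    intro f hf
    rw [← support_sum_monomial_coeff f]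
    refine Submodule.sum_mem _ ?_
    intro d hd
    have hdeg : q + 1 ≤ deg d := hf d hd
    obtain ⟨i, hi⟩ : ∃ i, d i ≠ 0 := by
      by_contra hc; push_neg at hc
      have : d = 0 := Finsupp.ext hc
      subst this
      simp [deg] at hdeg
    have hle : Finsupp.single i 1 ≤ d := Finsupp.single_le_iff.mpr (Nat.one_le_iff_ne_zero.mpr hi)
    have hsplit : monomial d (coeff d f) =
        monomial (d - Finsupp.single i 1) (coeff d f) * X i := by
      rw [X, monomial_mul, mul_one, tsub_add_cancel_of_le hle]
    rw [hsplit, pow_succ]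
    refine Submodule.mul_mem_mul (ih _ ?_) (Ideal.subset_span ⟨i, rfl⟩)
    intro e he
    have he' : e = d - Finsupp.single i 1 := by
      by_contra hc
      exact hc (Finset.mem_singleton.mp (support_monomial_subset he))
    subst he'
    have : deg (d - Finsupp.single i 1) + 1 = deg d := by
      have := deg_add (d - Finsupp.single i 1) (Finsupp.single i 1)
      rw [tsub_add_cancel_of_le hle] at this
      have hs : deg (Finsupp.single i 1) = 1 := by
        simp [deg, Finsupp.sum_single_index]
      omega
    omega


lemma constantCoeff_pderiv (i : Fin n) (f : MvPolynomial (Fin n) k) :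
    constantCoeff (pderiv i f) = coeff (Finsupp.single i 1) f := by
  induction f using MvPolynomial.induction_on' with
  | monomial d c =>
    rw [pderiv_monomial]
    rw [coeff_monomial]
    rcases eq_or_ne d (Finsupp.single i 1) with rfl | hd
    · simp
    · rw [if_neg hd]
      by_cases h0 : d - Finsupp.single i 1 = 0
      · have hdi : d i = 0 := by
          by_contra hdi
          have h1 : Finsupp.single i 1 ≤ d := Finsupp.single_le_iff.mpr (by omega)
          have := tsub_add_cancel_of_le h1
          rw [h0] at this
          exact hd (by simpa using this.symm)
        simp [constantCoeff_monomial, hdi]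
      · simp [constantCoeff_monomial, h0]
  | add f g hf hg => simp [hf, hg]

variable {I : Ideal (MvPolynomial (Fin n) k)}


lemma deg_le_of_small {d : Fin n →₀ ℕ} (h : ∀ i, d i < p) : deg d ≤ n * (p - 1) := by
  have h1 : deg d ≤ ∑ i : Fin n, d i :=
    Finset.sum_le_sum_of_subset (Finset.subset_univ _)
  have h2 : ∑ i : Fin n, d i ≤ ∑ _i : Fin n, (p - 1) := by
    refine Finset.sum_le_sum fun i _ => ?_
    have := h i; omega
  simpa using h1.trans h2


lemma I_eq_span_monomial (hI : I = Ideal.span (Set.range fun i : Fin n => (X i : MvPolynomial (Fin n) k) ^ p)) :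
    I = Ideal.span ((fun s => monomial s (1 : k)) ''
      (Set.range fun i : Fin n => Finsupp.single i p)) := by
  rw [hI]
  congr 1
  rw [← Set.range_comp]
  refine congrArg _ (funext fun i => ?_)
  simp [Function.comp, X_pow_eq_monomial]

lemma mem_I_of_forall (hI : I = Ideal.span (Set.range fun i : Fin n => (X i : MvPolynomial (Fin n) k) ^ p)) {f : MvPolynomial (Fin n) k}
    (h : ∀ d ∈ f.support, ∃ i, p ≤ d i) : f ∈ I := by
  rw [I_eq_span_monomial hI, mem_ideal_span_monomial_image]
  intro d hd
  obtain ⟨i, hi⟩ := h d hd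
  exact ⟨Finsupp.single i p, ⟨i, rfl⟩, Finsupp.single_le_iff.mpr hi⟩

lemma sX_pow_le_I (hI : I = Ideal.span (Set.range fun i : Fin n => (X i : MvPolynomial (Fin n) k) ^ p)) {q : ℕ} (hq : n * (p - 1) < q) : (sX (k := k)) ^ q ≤ I := by
  intro f hf
  refine mem_I_of_forall hI fun d hd => ?_
  by_contra hc
  push_neg at hc
  have h1 := deg_le_of_small (fun i => hc i)
  have h2 := deg_ge_of_mem_sX_pow q f hf d hd
  omega

lemma pow_p_mem_I (hI : I = Ideal.span (Set.range fun i : Fin n => (X i : MvPolynomial (Fin n) k) ^ p)) {f : MvPolynomial (Fin n) k} (hf : f ∈ (sX (k := k))) : f ^ p ∈ I := by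
  have hp0 : p ≠ 0 := hp.out.ne_zero
  rw [sX] at hf
  refine Submodule.span_induction ?_ ?_ ?_ ?_ hf
  · rintro _ ⟨i, rfl⟩
    rw [hI]
    exact Ideal.subset_span ⟨i, rfl⟩
  · rw [zero_pow hp0]; exact I.zero_mem
  · intro a b _ _ hpa hpb
    rw [add_pow_char]
    exact I.add_mem hpa hpb
  · intro r a _ hpa
    rw [smul_eq_mul, mul_pow]
    exact I.mul_mem_left _ hpa


/-- the constant term algebra map -/
noncomputable def eps (hI : I = Ideal.span (Set.range fun i : Fin n => (X i : MvPolynomial (Fin n) k) ^ p)) :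
    (MvPolynomial (Fin n) k ⧸ I) →ₐ[k] k :=
  Ideal.Quotient.liftₐ I (aeval 0) (by
    intro a ha
    rw [hI] at ha
    have hle : Ideal.span (Set.range fun i : Fin n => (X i : MvPolynomial (Fin n) k) ^ p) ≤
        RingHom.ker (aeval (0 : Fin n → k)).toRingHom := by
      rw [Ideal.span_le]
      rintro _ ⟨i, rfl⟩
      simp [RingHom.mem_ker, zero_pow hp.out.ne_zero]
    exact hle ha)

lemma eps_mk (hI : I = Ideal.span (Set.range fun i : Fin n => (X i : MvPolynomial (Fin n) k) ^ p)) (f : MvPolynomial (Fin n) k) :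
    eps hI (Ideal.Quotient.mk I f) = constantCoeff f := by
  show (aeval (0 : Fin n → k)) f = constantCoeff f
  simp [aeval_zero]

/-- the dual-number evaluation detecting the j-th linear coefficient -/
noncomputable def tau (j : Fin n)
    (hI : I = Ideal.span (Set.range fun i : Fin n => (X i : MvPolynomial (Fin n) k) ^ p)) :
    (MvPolynomial (Fin n) k ⧸ I) →ₐ[k] DualNumber k :=
  Ideal.Quotient.liftₐ I
    (aeval fun i => if i = j then (DualNumber.eps : DualNumber k) else 0) (by
    intro a ha
    rw [hI] at ha
    have hle : Ideal.span (Set.range fun i : Fin n => (X i : MvPolynomial (Fin n) k) ^ p) ≤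
        RingHom.ker (aeval fun i =>
          if i = j then (DualNumber.eps : DualNumber k) else 0).toRingHom := by
      rw [Ideal.span_le]
      rintro _ ⟨i, rfl⟩
      have : ((if i = j then (DualNumber.eps : DualNumber k) else 0)) ^ p = 0 := by
        split
        · have h2 : 2 ≤ p := hp.out.two_le
          calc (DualNumber.eps : DualNumber k) ^ p
              = DualNumber.eps ^ 2 * DualNumber.eps ^ (p - 2) := by
                rw [← pow_add]; congr 1; omega
            _ = 0 := by rw [sq, DualNumber.eps_mul_eps, zero_mul]
        · exact zero_pow hp.out.ne_zero
      simp [RingHom.mem_ker, this]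
    exact hle ha)

lemma tau_mk (hI : I = Ideal.span (Set.range fun i : Fin n => (X i : MvPolynomial (Fin n) k) ^ p)) (j : Fin n) (f : MvPolynomial (Fin n) k) :
    tau j hI (Ideal.Quotient.mk I f) =
      aeval (fun i => if i = j then (DualNumber.eps : DualNumber k) else 0) f := by
  unfold tau
  rfl

lemma fst_aeval (j : Fin n) (f : MvPolynomial (Fin n) k) :
    (aeval (fun i => if i = j then (DualNumber.eps : DualNumber k) else 0) f).fst =
      constantCoeff f := by
  have : (TrivSqZeroExt.fstHom k k k).comp
      (aeval fun i => if i = j then (DualNumber.eps : DualNumber k) else 0) =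
      (aeval fun _ => (0 : k)) := by
    refine algHom_ext fun i => ?_
    simp only [AlgHom.comp_apply, aeval_X]
    split <;> simp [TrivSqZeroExt.fstHom_apply, DualNumber.fst_eps]
  have h2 := congrArg (fun g => g f) (congrArg DFunLike.coe this)
  simp only [AlgHom.comp_apply] at h2
  have h3 : (aeval fun _ => (0 : k)) f = constantCoeff f := by
    have : (fun _ : Fin n => (0 : k)) = 0 := rfl
    rw [this, aeval_zero]; simp
  rw [← h3]
  exact h2

lemma snd_aeval (j : Fin n) (f : MvPolynomial (Fin n) k) :
    (aeval (fun i => if i = j then (DualNumber.eps : DualNumber k) else 0) f).snd =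
      constantCoeff (pderiv j f) := by
  induction f using MvPolynomial.induction_on with
  | C c => simp [TrivSqZeroExt.algebraMap_eq_inl']
  | add f g hf hg => simp [map_add, hf, hg]
  | mul_X f i hf =>
    rw [map_mul, aeval_X]
    rw [pderiv_mul, pderiv_X, map_add, map_mul]
    rcases eq_or_ne i j with rfl | hij
    · simp only [if_pos rfl, if_true]
      rw [TrivSqZeroExt.snd_mul]
      simp only [DualNumber.fst_eps, DualNumber.snd_eps, MulOpposite.op_zero, zero_smul,
        add_zero, smul_eq_mul, mul_one]
      simp [fst_aeval, Pi.single_eq_same]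
    · simp only [if_neg hij]
      rw [mul_zero]
      simp [Pi.single_eq_of_ne hij, hf]

/-- the j-th linear coefficient functional -/
noncomputable def lam (j : Fin n)
    (hI : I = Ideal.span (Set.range fun i : Fin n => (X i : MvPolynomial (Fin n) k) ^ p)) :
    (MvPolynomial (Fin n) k ⧸ I) →ₗ[k] k :=
  (TrivSqZeroExt.sndHom k k).comp (tau j hI).toLinearMap

lemma lam_mk (hI : I = Ideal.span (Set.range fun i : Fin n => (X i : MvPolynomial (Fin n) k) ^ p)) (j : Fin n) (f : MvPolynomial (Fin n) k) :
    lam j hI (Ideal.Quotient.mk I f) = constantCoeff (pderiv j f) := by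
  rw [lam, LinearMap.comp_apply, AlgHom.toLinearMap_apply, tau_mk, TrivSqZeroExt.sndHom_apply,
    snd_aeval]

lemma fst_tau (hI : I = Ideal.span (Set.range fun i : Fin n => (X i : MvPolynomial (Fin n) k) ^ p)) (j : Fin n) (a : MvPolynomial (Fin n) k ⧸ I) :
    (tau j hI a).fst = eps hI a := by
  obtain ⟨f, rfl⟩ := Ideal.Quotient.mk_surjective a
  rw [tau_mk, eps_mk, fst_aeval]



/-- the maximal ideal of the quotient -/
noncomputable def mI (I : Ideal (MvPolynomial (Fin n) k)) : Ideal (MvPolynomial (Fin n) k ⧸ I) :=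
  Ideal.span (Set.range fun i : Fin n => Ideal.Quotient.mk I (X i))

lemma mI_eq_map : mI I = Ideal.map (Ideal.Quotient.mk I) (sX (k := k)) := by
  rw [mI, sX, Ideal.map_span, ← Set.range_comp]
  rfl


lemma mem_mI_iff (hI : I = Ideal.span (Set.range fun i : Fin n => (X i : MvPolynomial (Fin n) k) ^ p)) {a : MvPolynomial (Fin n) k ⧸ I} : a ∈ mI I ↔ eps hI a = 0 := by
  constructor
  · intro ha
    have hle : mI I ≤ RingHom.ker (eps hI).toRingHom := by
      rw [mI, Ideal.span_le]
      rintro _ ⟨i, rfl⟩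
      simp [RingHom.mem_ker, eps_mk]
    exact hle ha
  · intro ha
    obtain ⟨f, rfl⟩ := Ideal.Quotient.mk_surjective a
    rw [eps_mk] at ha
    rw [mI_eq_map]
    exact Ideal.mem_map_of_mem _ (mem_sX_iff.mpr ha)

lemma pow_p_zero (hI : I = Ideal.span (Set.range fun i : Fin n => (X i : MvPolynomial (Fin n) k) ^ p)) {a : MvPolynomial (Fin n) k ⧸ I} (ha : a ∈ mI I) : a ^ p = 0 := by
  rw [mI_eq_map] at ha
  obtain ⟨f, hf, rfl⟩ := Ideal.mem_map_iff_of_surjective _ Ideal.Quotient.mk_surjective |>.mp ha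
  rw [← map_pow, Ideal.Quotient.eq_zero_iff_mem]
  exact pow_p_mem_I hI hf

lemma isUnit_iff_eps (hI : I = Ideal.span (Set.range fun i : Fin n => (X i : MvPolynomial (Fin n) k) ^ p)) {a : MvPolynomial (Fin n) k ⧸ I} : IsUnit a ↔ eps hI a ≠ 0 := by
  constructor
  · intro ha
    exact isUnit_iff_ne_zero.mp (ha.map (eps hI))
  · intro ha
    have hb : a - algebraMap k _ (eps hI a) ∈ mI I := by
      rw [mem_mI_iff hI, map_sub, AlgHom.commutes]
      simp
    have hnil : IsNilpotent (a - algebraMap k _ (eps hI a)) := ⟨p, pow_p_zero hI hb⟩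
    have hu : IsUnit (algebraMap k (MvPolynomial (Fin n) k ⧸ I) (eps hI a)) :=
      (isUnit_iff_ne_zero.mpr ha).map (algebraMap k _)
    have := hnil.isUnit_add_right_of_commute hu (Commute.all _ _)
    rwa [sub_add_cancel] at this

lemma endo_m (hI : I = Ideal.span (Set.range fun i : Fin n => (X i : MvPolynomial (Fin n) k) ^ p)) (ψ : (MvPolynomial (Fin n) k ⧸ I) →ₐ[k] (MvPolynomial (Fin n) k ⧸ I))
    {a : MvPolynomial (Fin n) k ⧸ I} (ha : a ∈ mI I) : ψ a ∈ mI I := by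
  rw [mem_mI_iff hI]
  have : (eps hI (ψ a)) ^ p = 0 := by
    rw [← map_pow, ← map_pow, pow_p_zero hI ha, map_zero, map_zero]
  exact pow_eq_zero_iff hp.out.ne_zero |>.mp this

lemma endo_m2 (hI : I = Ideal.span (Set.range fun i : Fin n => (X i : MvPolynomial (Fin n) k) ^ p)) (ψ : (MvPolynomial (Fin n) k ⧸ I) →ₐ[k] (MvPolynomial (Fin n) k ⧸ I))
    {a : MvPolynomial (Fin n) k ⧸ I} (ha : a ∈ mI I ^ 2) : ψ a ∈ mI I ^ 2 := by
  rw [pow_two] at ha ⊢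
  refine Submodule.mul_induction_on ha ?_ ?_
  · intro x hx y hy
    rw [map_mul]
    exact Submodule.mul_mem_mul (endo_m hI ψ hx) (endo_m hI ψ hy)
  · intro x y hx hy
    rw [map_add]
    exact Submodule.add_mem _ hx hy


lemma lam_mul (hI : I = Ideal.span (Set.range fun i : Fin n => (X i : MvPolynomial (Fin n) k) ^ p)) (j : Fin n) (a b : MvPolynomial (Fin n) k ⧸ I) :
    lam j hI (a * b) = eps hI a * lam j hI b + lam j hI a * eps hI b := by
  simp only [lam, LinearMap.comp_apply, AlgHom.toLinearMap_apply, TrivSqZeroExt.sndHom_apply,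
    map_mul, TrivSqZeroExt.snd_mul, fst_tau hI]
  simp [op_smul_eq_smul, smul_eq_mul, mul_comm]

lemma lam_one (hI : I = Ideal.span (Set.range fun i : Fin n => (X i : MvPolynomial (Fin n) k) ^ p)) (j : Fin n) : lam j hI (1 : MvPolynomial (Fin n) k ⧸ I) = 0 := by
  simp [lam]

lemma lam_algebraMap (hI : I = Ideal.span (Set.range fun i : Fin n => (X i : MvPolynomial (Fin n) k) ^ p)) (j : Fin n) (c : k) :
    lam j hI (algebraMap k (MvPolynomial (Fin n) k ⧸ I) c) = 0 := by
  rw [Algebra.algebraMap_eq_smul_one, map_smul, lam_one hI, smul_zero]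

lemma lam_m2 (hI : I = Ideal.span (Set.range fun i : Fin n => (X i : MvPolynomial (Fin n) k) ^ p)) (j : Fin n) {a : MvPolynomial (Fin n) k ⧸ I} (ha : a ∈ mI I ^ 2) :
    lam j hI a = 0 := by
  rw [pow_two] at ha
  refine Submodule.mul_induction_on ha ?_ ?_
  · intro x hx y hy
    rw [lam_mul hI, (mem_mI_iff hI).mp hx, (mem_mI_iff hI).mp hy]
    ring
  · intro x y hx hy
    rw [map_add, hx, hy, add_zero]

lemma lam_X (hI : I = Ideal.span (Set.range fun i : Fin n => (X i : MvPolynomial (Fin n) k) ^ p)) (j i : Fin n) :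
    lam j hI (Ideal.Quotient.mk I (X i)) = if i = j then 1 else 0 := by
  rw [lam_mk, constantCoeff_pderiv]
  rcases eq_or_ne i j with rfl | hij
  · simp [coeff_X]
  · rw [if_neg hij, coeff_X', if_neg (by
      intro h
      exact hij (by
        have := (Finsupp.single_left_inj (by norm_num : (1:ℕ) ≠ 0)).mp h
        exact this))]

lemma decomp (hI : I = Ideal.span (Set.range fun i : Fin n => (X i : MvPolynomial (Fin n) k) ^ p)) (a : MvPolynomial (Fin n) k ⧸ I) :
    a - algebraMap k _ (eps hI a)
      - ∑ l, lam l hI a • Ideal.Quotient.mk I (X l) ∈ mI I ^ 2 := by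
  obtain ⟨f, rfl⟩ := Ideal.Quotient.mk_surjective a
  set g : MvPolynomial (Fin n) k :=
    f - C (constantCoeff f) - ∑ l, coeff (Finsupp.single l 1) f • X l with hg
  have hmk : Ideal.Quotient.mk I g =
      Ideal.Quotient.mk I f - algebraMap k _ (eps hI (Ideal.Quotient.mk I f))
        - ∑ l, lam l hI (Ideal.Quotient.mk I f) • Ideal.Quotient.mk I (X l) := by
    rw [hg, map_sub, map_sub, map_sum]
    congr 1
    · congr 1
      rw [eps_mk, ← MvPolynomial.algebraMap_eq, ← Ideal.Quotient.mkₐ_eq_mk k I, AlgHom.commutes]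
    · refine Finset.sum_congr rfl fun l _ => ?_
      rw [lam_mk, constantCoeff_pderiv, ← Ideal.Quotient.mkₐ_eq_mk k I, map_smul]
  have hg2 : g ∈ (sX (k := k)) ^ 2 := by
    refine mem_sX_pow_of_deg_ge 2 g fun d hd => ?_
    by_contra hc
    push_neg at hc
    rw [mem_support_iff] at hd
    refine hd ?_
    interval_cases hdeg : deg d
    · -- deg d = 0
      have : d = 0 := deg_eq_zero hdeg
      subst this
      rw [hg]
      simp only [coeff_sub, coeff_C, if_pos rfl]
      rw [coeff_sum]
      simp only [coeff_smul, coeff_zero_X, smul_eq_mul, mul_zero, Finset.sum_const_zero]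
      show constantCoeff f - constantCoeff f - 0 = 0
      ring
    · -- deg d = 1
      obtain ⟨i, rfl⟩ := deg_one hdeg
      rw [hg]
      simp only [coeff_sub]
      rw [coeff_sum]
      have hC : coeff (Finsupp.single i 1) (C (constantCoeff f) : MvPolynomial (Fin n) k) = 0 := by
        rw [coeff_C, if_neg (by
          intro h
          have := Finsupp.single_eq_zero.mp h.symm
          norm_num at this)]
      have hsum : (∑ l, coeff (Finsupp.single i 1) ((coeff (Finsupp.single l 1) f) • (X l : MvPolynomial (Fin n) k)))
          = coeff (Finsupp.single i 1) f := by
        rw [Finset.sum_eq_single i]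
        · rw [coeff_smul, coeff_X, smul_eq_mul, if_pos rfl, mul_one]
        · intro l _ hl
          rw [coeff_smul, coeff_X', if_neg (by
            intro h
            exact hl ((Finsupp.single_left_inj (by norm_num : (1:ℕ) ≠ 0)).mp h)), smul_zero]
        · intro h; exact absurd (Finset.mem_univ i) h
      rw [hC, hsum]
      ring
  rw [← hmk]
  rw [mI_eq_map, ← Ideal.map_pow]
  exact Ideal.mem_map_of_mem _ hg2

lemma comp_lemma (hI : I = Ideal.span (Set.range fun i : Fin n => (X i : MvPolynomial (Fin n) k) ^ p)) (ψ : (MvPolynomial (Fin n) k ⧸ I) →ₐ[k] (MvPolynomial (Fin n) k ⧸ I))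
    (a : MvPolynomial (Fin n) k ⧸ I) (j : Fin n) :
    lam j hI (ψ a) = ∑ l, lam l hI a * lam j hI (ψ (Ideal.Quotient.mk I (X l))) := by
  have hdec := decomp hI a
  set r := a - algebraMap k _ (eps hI a) - ∑ l, lam l hI a • Ideal.Quotient.mk I (X l) with hr
  have ha : a = r + algebraMap k _ (eps hI a) + ∑ l, lam l hI a • Ideal.Quotient.mk I (X l) := by
    rw [hr]; ring
  conv_lhs => rw [ha]
  rw [map_add, map_add, map_add, map_add]
  rw [lam_m2 hI j (endo_m2 hI ψ hdec)]
  rw [AlgHom.commutes, lam_algebraMap hI]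
  rw [map_sum, map_sum]
  simp only [map_smul]
  rw [zero_add, zero_add]
  refine Finset.sum_congr rfl fun l _ => ?_
  rw [smul_eq_mul]


noncomputable def Mmat (hI : I = Ideal.span (Set.range fun i : Fin n => (X i : MvPolynomial (Fin n) k) ^ p))
    (φ : (MvPolynomial (Fin n) k ⧸ I) →ₐ[k] (MvPolynomial (Fin n) k ⧸ I)) :
    Matrix (Fin n) (Fin n) k :=
  Matrix.of fun i j => lam j hI (φ (Ideal.Quotient.mk I (X i)))


lemma Mmat_comp (hI : I = Ideal.span (Set.range fun i : Fin n => (X i : MvPolynomial (Fin n) k) ^ p)) (φ ψ : (MvPolynomial (Fin n) k ⧸ I) →ₐ[k] (MvPolynomial (Fin n) k ⧸ I)) :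
    Mmat hI (ψ.comp φ) = Mmat hI φ * Mmat hI ψ := by
  ext i j
  rw [Matrix.mul_apply]
  show lam j hI (ψ (φ (Ideal.Quotient.mk I (X i)))) = _
  rw [comp_lemma hI ψ]
  rfl

lemma Mmat_id (hI : I = Ideal.span (Set.range fun i : Fin n => (X i : MvPolynomial (Fin n) k) ^ p)) : Mmat hI (AlgHom.id k (MvPolynomial (Fin n) k ⧸ I)) = 1 := by
  ext i j
  show lam j hI (Ideal.Quotient.mk I (X i)) = _
  rw [lam_X hI, Matrix.one_apply]

lemma eps_jac (hI : I = Ideal.span (Set.range fun i : Fin n => (X i : MvPolynomial (Fin n) k) ^ p)) (φ : (MvPolynomial (Fin n) k ⧸ I) →ₐ[k] (MvPolynomial (Fin n) k ⧸ I))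
    (P : Fin n → MvPolynomial (Fin n) k)
    (hP : ∀ i, Ideal.Quotient.mk I (P i) = φ (Ideal.Quotient.mk I (X i))) :
    (Matrix.of fun i j : Fin n => Ideal.Quotient.mk I (pderiv j (P i))).map (eps hI)
      = Mmat hI φ := by
  ext i j
  show eps hI (Ideal.Quotient.mk I (pderiv j (P i))) = lam j hI (φ (Ideal.Quotient.mk I (X i)))
  rw [eps_mk, ← lam_mk hI j (P i), hP i]

lemma findim (hI : I = Ideal.span (Set.range fun i : Fin n => (X i : MvPolynomial (Fin n) k) ^ p)) : FiniteDimensional k (MvPolynomial (Fin n) k ⧸ I) := by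
  classical
  refine ⟨⟨Finset.image
    (fun dd : Fin n → Fin p => Ideal.Quotient.mk I
      (monomial (Finsupp.equivFunOnFinite.symm fun i => (dd i : ℕ)) (1 : k))) Finset.univ, ?_⟩⟩
  rw [eq_top_iff]
  rintro a -
  obtain ⟨f, rfl⟩ := Ideal.Quotient.mk_surjective a
  rw [← support_sum_monomial_coeff f, map_sum]
  refine Submodule.sum_mem _ fun d _ => ?_
  have hmono : (monomial d (coeff d f) : MvPolynomial (Fin n) k)
      = coeff d f • monomial d 1 := by
    rw [smul_monomial, smul_eq_mul, mul_one]
  rw [hmono, ← Ideal.Quotient.mkₐ_eq_mk k I, map_smul]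
  refine Submodule.smul_mem _ _ ?_
  by_cases hd : ∀ i, d i < p
  · refine Submodule.subset_span ?_
    rw [Finset.coe_image]
    refine ⟨fun i => ⟨d i, hd i⟩, Finset.mem_coe.mpr (Finset.mem_univ _), ?_⟩
    simp only [Ideal.Quotient.mkₐ_eq_mk]
    have : (Finsupp.equivFunOnFinite.symm fun i => ((d i : ℕ))) = d :=
      Finsupp.equivFunOnFinite_symm_coe d
    rw [this]
  · push_neg at hd
    obtain ⟨i, hi⟩ := hd
    have : (monomial d (1:k) : MvPolynomial (Fin n) k) ∈ I := by
      refine mem_I_of_forall hI fun e he => ?_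
      have : e = d := Finset.mem_singleton.mp (support_monomial_subset he)
      subst this
      exact ⟨i, hi⟩
    rw [Ideal.Quotient.mkₐ_eq_mk, Ideal.Quotient.eq_zero_iff_mem.mpr this]
    exact Submodule.zero_mem _


/-- the endomorphism sending the variables to given elements of the maximal ideal -/
noncomputable def rho (hI : I = Ideal.span (Set.range fun i : Fin n => (X i : MvPolynomial (Fin n) k) ^ p))
    (c : Fin n → (MvPolynomial (Fin n) k ⧸ I)) (hc : ∀ i, c i ∈ mI I) :
    (MvPolynomial (Fin n) k ⧸ I) →ₐ[k] (MvPolynomial (Fin n) k ⧸ I) :=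
  Ideal.Quotient.liftₐ I (aeval c) (by
    intro a ha
    rw [hI] at ha
    have hle : Ideal.span (Set.range fun i : Fin n => (X i : MvPolynomial (Fin n) k) ^ p) ≤
        RingHom.ker (aeval c).toRingHom := by
      rw [Ideal.span_le]
      rintro _ ⟨i, rfl⟩
      have : (aeval c) ((X i : MvPolynomial (Fin n) k) ^ p) = 0 := by
        rw [map_pow, aeval_X]
        exact pow_p_zero hI (hc i)
      simpa [RingHom.mem_ker] using this
    exact hle ha)

lemma rho_mk (hI : I = Ideal.span (Set.range fun i : Fin n => (X i : MvPolynomial (Fin n) k) ^ p)) (c : Fin n → (MvPolynomial (Fin n) k ⧸ I)) (hc : ∀ i, c i ∈ mI I)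
    (f : MvPolynomial (Fin n) k) :
    rho hI c hc (Ideal.Quotient.mk I f) = aeval c f := by
  unfold rho
  rfl

lemma rho_surjective (hI : I = Ideal.span (Set.range fun i : Fin n => (X i : MvPolynomial (Fin n) k) ^ p)) (c : Fin n → (MvPolynomial (Fin n) k ⧸ I)) (hc : ∀ i, c i ∈ mI I)
    (hc2 : ∀ i, c i - Ideal.Quotient.mk I (X i) ∈ mI I ^ 2) :
    Function.Surjective (rho hI c hc) := by
  set ρ := rho hI c hc with hρ
  set σl : (MvPolynomial (Fin n) k ⧸ I) →ₗ[k] (MvPolynomial (Fin n) k ⧸ I) :=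
    ρ.toLinearMap - LinearMap.id with hσ
  have hσa : ∀ a, σl a = ρ a - a := fun a => rfl

  -- eps is preserved
  have heps : ∀ a, eps hI (ρ a) = eps hI a := by
    have hcomp : (eps hI).comp ρ = eps hI := by
      refine Ideal.Quotient.algHom_ext k ?_
      refine algHom_ext fun i => ?_
      simp only [AlgHom.comp_apply, Ideal.Quotient.mkₐ_eq_mk]
      rw [rho_mk, aeval_X]
      exact ((mem_mI_iff hI).mp (hc i)).trans ((mem_mI_iff hI).mp
        (Ideal.subset_span ⟨i, rfl⟩)).symm
    exact fun a => congrArg (fun g => g a) (congrArg DFunLike.coe hcomp)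
  -- lam is preserved
  have hlam : ∀ j a, lam j hI (ρ a) = lam j hI a := by
    intro j a
    rw [comp_lemma hI ρ a j]
    have hcl : ∀ l, lam j hI (ρ (Ideal.Quotient.mk I (X l))) = if l = j then 1 else 0 := by
      intro l
      rw [hρ, rho_mk, aeval_X]
      have : c l = (c l - Ideal.Quotient.mk I (X l)) + Ideal.Quotient.mk I (X l) := by ring
      rw [this, map_add, lam_m2 hI j (hc2 l), zero_add, lam_X hI]
    calc (∑ l, lam l hI a * lam j hI (ρ (Ideal.Quotient.mk I (X l))))
        = ∑ l, lam l hI a * (if l = j then 1 else 0) := by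
          refine Finset.sum_congr rfl fun l _ => by rw [hcl l]
      _ = lam j hI a := by simp
  -- σl lands in the square of the maximal ideal
  have hσ2 : ∀ a, σl a ∈ mI I ^ 2 := by
    intro a
    have he : eps hI (σl a) = 0 := by
      rw [hσa, map_sub, heps, sub_self]
    have hl : ∀ l, lam l hI (σl a) = 0 := by
      intro l
      rw [hσa, map_sub, hlam, sub_self]
    have := decomp hI (σl a)
    rw [he, map_zero] at this
    simp only [hl, zero_smul, Finset.sum_const_zero, sub_zero] at this
    exact this
  -- σl decreases the filtration
  have hstep : ∀ (q : ℕ) (a : MvPolynomial (Fin n) k ⧸ I), a ∈ mI I ^ q → σl a ∈ mI I ^ (q + 1) := by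
    intro q
    induction q with
    | zero =>
      intro a _
      exact Ideal.pow_le_pow_right (by omega) (hσ2 a)
    | succ q ih =>
      intro a ha
      rw [pow_succ (mI I) q] at ha
      refine Submodule.mul_induction_on ha ?_ ?_
      · intro x hx y hy
        have hkey : σl (x * y) = ρ x * σl y + σl x * y := by
          simp only [hσa, map_mul]
          ring
        rw [hkey]
        refine Submodule.add_mem _ ?_ ?_
        · have hρx : ρ x ∈ mI I ^ q := by
            have : ρ x = x + σl x := by rw [hσa]; ring
            rw [this]
            exact Submodule.add_mem _ hx (Ideal.pow_le_pow_right (by omega) (ih x hx))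
          have : ρ x * σl y ∈ mI I ^ q * mI I ^ 2 :=
            Submodule.mul_mem_mul hρx (hσ2 y)
          rwa [← pow_add (mI I) q 2] at this
        · have : σl x * y ∈ mI I ^ (q + 1) * mI I :=
            Submodule.mul_mem_mul (ih x hx) hy
          rwa [← pow_succ (mI I) (q + 1)] at this
      · intro x y hx hy
        rw [map_add]
        exact Submodule.add_mem _ hx hy
  -- the maximal ideal is nilpotent
  have hm0 : mI I ^ (n * (p - 1) + 1) = ⊥ := by
    rw [eq_bot_iff, mI_eq_map, ← Ideal.map_pow]
    intro a ha
    obtain ⟨f, hf, rfl⟩ := Ideal.mem_map_iff_of_surjective _ Ideal.Quotient.mk_surjective |>.mp ha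
    have : f ∈ I := sX_pow_le_I hI (by omega) hf
    simpa [Ideal.Quotient.eq_zero_iff_mem] using this
  -- σl is nilpotent
  have hpows : ∀ (q : ℕ) (a : MvPolynomial (Fin n) k ⧸ I), (σl ^ q) a ∈ mI I ^ q := by
    intro q
    induction q with
    | zero => intro a; simp
    | succ q ih =>
      intro a
      have hh : (σl ^ (q + 1)) a = σl ((σl ^ q) a) := by
        rw [pow_succ']; rfl
      rw [hh]
      exact hstep q _ (ih a)
  have hnil : IsNilpotent σl := by
    refine ⟨n * (p - 1) + 1, ?_⟩
    refine LinearMap.ext fun a => ?_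
    have := hpows (n * (p - 1) + 1) a
    rw [hm0] at this
    rw [LinearMap.zero_apply]
    exact (Submodule.mem_bot _).mp this
  have hunit : IsUnit (ρ.toLinearMap) := by
    have h1 : IsUnit (σl + 1) := hnil.isUnit_add_one
    have h2 : σl + 1 = ρ.toLinearMap := by
      rw [hσ]
      have : (1 : (MvPolynomial (Fin n) k ⧸ I) →ₗ[k] (MvPolynomial (Fin n) k ⧸ I)) = LinearMap.id := rfl
      rw [this]
      abel
    rwa [h2] at h1
  have := (Module.End.isUnit_iff ρ.toLinearMap).mp hunit
  exact this.2


end Stmt0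


open Stmt0 in
/-- Over an algebraically closed field `k` of characteristic `p > 0`, a
`k`-algebra endomorphism `φ` of the truncated polynomial ring
`A(n) = k[x₁,…,xₙ]/(x₁^p,…,xₙ^p)` is an automorphism iff it stabilizes the unique maximal
ideal (generated by the images of the variables) and the determinant of its Jacobian
matrix is invertible in `A(n)`. -/
theorem stmt_0 (k : Type*) [Field k] [IsAlgClosed k] (p : ℕ) [Fact p.Prime] [CharP k p]
    (n : ℕ) (I : Ideal (MvPolynomial (Fin n) k))
    (hI : I = Ideal.span (Set.range fun i : Fin n => (X i : MvPolynomial (Fin n) k) ^ p))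
    (φ : (MvPolynomial (Fin n) k ⧸ I) →ₐ[k] (MvPolynomial (Fin n) k ⧸ I)) :
    Function.Bijective φ ↔
      ((∀ f ∈ Ideal.span (Set.range fun i : Fin n => Ideal.Quotient.mk I (X i)),
          φ f ∈ Ideal.span (Set.range fun i : Fin n => Ideal.Quotient.mk I (X i))) ∧
        ∀ P : Fin n → MvPolynomial (Fin n) k,
          (∀ i, Ideal.Quotient.mk I (P i) = φ (Ideal.Quotient.mk I (X i))) →
          IsUnit (Matrix.det
            (Matrix.of fun i j : Fin n => Ideal.Quotient.mk I (pderiv j (P i))))) := by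
  constructor
  · intro hb
    constructor
    · intro f hf
      exact endo_m hI φ (show f ∈ mI I from hf)
    · intro P hP
      set e := AlgEquiv.ofBijective φ hb with he
      set ψ := e.symm.toAlgHom with hψ
      have hcomp : ψ.comp φ = AlgHom.id k (MvPolynomial (Fin n) k ⧸ I) := by
        refine AlgHom.ext fun a => ?_
        show e.symm (φ a) = a
        have : φ a = e a := rfl
        rw [this, AlgEquiv.symm_apply_apply]
      have h1 : Mmat hI φ * Mmat hI ψ = 1 := by
        rw [← Mmat_comp hI, hcomp, Mmat_id hI]
      have hdet : IsUnit (Mmat hI φ).det :=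
        IsUnit.of_mul_eq_one (Mmat hI ψ).det
          (by rw [← Matrix.det_mul, h1, Matrix.det_one])
      rw [isUnit_iff_eps hI]
      have h2 : eps hI (Matrix.det (Matrix.of fun i j : Fin n =>
          Ideal.Quotient.mk I (pderiv j (P i)))) = (Mmat hI φ).det := by
        rw [AlgHom.map_det, ← eps_jac hI φ P hP]
        rfl
      rw [h2]
      exact isUnit_iff_ne_zero.mp hdet
  · rintro ⟨h1, h2⟩
    choose P hP using fun i => Ideal.Quotient.mk_surjective (φ (Ideal.Quotient.mk I (X i)))
    have hdetA := h2 P hP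
    have hdet : IsUnit (Mmat hI φ).det := by
      have hne := (isUnit_iff_eps hI).mp hdetA
      rw [AlgHom.map_det] at hne
      have hmm : (eps hI).mapMatrix (Matrix.of fun i j : Fin n =>
          Ideal.Quotient.mk I (pderiv j (P i))) = (Matrix.of fun i j : Fin n =>
          Ideal.Quotient.mk I (pderiv j (P i))).map (eps hI) := rfl
      rw [hmm, eps_jac hI φ P hP] at hne
      exact isUnit_iff_ne_zero.mpr hne
    set M := Mmat hI φ with hM
    have hNM : M⁻¹ * M = 1 := Matrix.nonsing_inv_mul M hdet
    set c : Fin n → (MvPolynomial (Fin n) k ⧸ I) :=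
      fun i => ∑ l, M⁻¹ i l • φ (Ideal.Quotient.mk I (X l)) with hcdef
    have hxm : ∀ l : Fin n, Ideal.Quotient.mk I (X l) ∈ mI I :=
      fun l => Ideal.subset_span ⟨l, rfl⟩
    have hc : ∀ i, c i ∈ mI I := by
      intro i
      rw [hcdef]
      refine Submodule.sum_mem _ fun l _ => ?_
      exact Submodule.smul_of_tower_mem _ _ (endo_m hI φ (hxm l))
    have hlamc : ∀ i j, lam j hI (c i) = if i = j then 1 else 0 := by
      intro i j
      rw [hcdef]
      simp only [map_sum, map_smul]
      have hent : ∀ l, lam j hI (φ (Ideal.Quotient.mk I (X l))) = M l j := fun l => rfl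
      calc (∑ l, M⁻¹ i l • lam j hI (φ (Ideal.Quotient.mk I (X l))))
          = ∑ l, M⁻¹ i l * M l j := by
            refine Finset.sum_congr rfl fun l _ => by rw [hent l, smul_eq_mul]
        _ = (M⁻¹ * M) i j := (Matrix.mul_apply).symm
        _ = (1 : Matrix (Fin n) (Fin n) k) i j := by rw [hNM]
        _ = if i = j then 1 else 0 := Matrix.one_apply
    have hc2 : ∀ i, c i - Ideal.Quotient.mk I (X i) ∈ mI I ^ 2 := by
      intro i
      have hd := decomp hI (c i)
      have he0 : eps hI (c i) = 0 := (mem_mI_iff hI).mp (hc i)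
      rw [he0, map_zero, sub_zero] at hd
      have hs : (∑ l, lam l hI (c i) • Ideal.Quotient.mk I (X l)) =
          Ideal.Quotient.mk I (X i) := by
        have : ∀ l, lam l hI (c i) • Ideal.Quotient.mk I (X l) =
            if l = i then Ideal.Quotient.mk I (X l) else 0 := by
          intro l
          rw [hlamc i l]
          rcases eq_or_ne i l with rfl | hil
          · simp
          · rw [if_neg hil, if_neg (Ne.symm hil), zero_smul]
        rw [Finset.sum_congr rfl fun l _ => this l]
        simp
      rw [hs] at hd
      exact hd
    have hsurj0 := rho_surjective hI c hc hc2
    have hsurj : Function.Surjective φ := by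
      intro y
      obtain ⟨z, hz⟩ := hsurj0 y
      obtain ⟨f, rfl⟩ := Ideal.Quotient.mk_surjective z
      rw [rho_mk] at hz
      refine ⟨aeval (fun i => ∑ l, M⁻¹ i l • Ideal.Quotient.mk I (X l)) f, ?_⟩
      rw [← hz, comp_aeval_apply]
      have hfc : (fun i => φ (∑ l, M⁻¹ i l • Ideal.Quotient.mk I (X l))) = c := by
        funext i
        rw [map_sum]
        simp only [map_smul]
        rfl
      rw [hfc]
    have hinj : Function.Injective φ := by
      haveI := findim hI
      exact (LinearMap.injective_iff_surjective (f := φ.toLinearMap)).mpr hsurj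
    exact ⟨hinj, hsurj⟩
end

section
/- Let k be a field of characteristic p > 0 and R_s = k[x_1,...,x_n]/⟨x_1^p,...,x_n^p⟩^{p^{s-1}}. If σ is a k-algebra automorphism of R_s, then the determinant of the Jacobian matrix J(σ) = (∂_j σ(x̄_i)) is an invertible element of R_s. -/
open MvPolynomial

theorem pderiv_aeval_sum {k : Type*} [CommRing k] {n : ℕ}
    (Q : Fin n → MvPolynomial (Fin n) k) (f : MvPolynomial (Fin n) k) (j : Fin n) :
    pderiv j (aeval Q f) = ∑ l, aeval Q (pderiv l f) * pderiv j (Q l) := by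
  induction f using MvPolynomial.induction_on with
  | C a => simp
  | add f g hf hg =>
    simp only [map_add, hf, hg, add_mul, Finset.sum_add_distrib]
  | mul_X f i hf =>
    have h1 : ∀ l, pderiv l (f * X i) = pderiv l f * X i + f * (Pi.single (M := fun _ : Fin n => MvPolynomial (Fin n) k) l 1 i) := by
      intro l; rw [pderiv_mul, pderiv_X]
    calc pderiv j (aeval Q (f * X i))
        = pderiv j (aeval Q f) * Q i + aeval Q f * pderiv j (Q i) := by
          rw [map_mul, aeval_X, pderiv_mul]
      _ = (∑ l, aeval Q (pderiv l f) * pderiv j (Q l)) * Q i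
            + aeval Q f * pderiv j (Q i) := by rw [hf]
      _ = ∑ l, aeval Q (pderiv l (f * X i)) * pderiv j (Q l) := by
          simp only [h1, map_add, map_mul, aeval_X, add_mul, Finset.sum_add_distrib,
            Finset.sum_mul]
          congr 1
          · exact Finset.sum_congr rfl fun l _ => by ring
          · rw [Finset.sum_eq_single i]
            · simp
            · intro l _ hli
              rw [Pi.single_eq_of_ne (by exact fun h => hli h.symm)]; simp
            · simp

/-- For `k` a field of characteristic `p > 0` and
`R_s = k[x₁,…,xₙ]/⟨x₁^p,…,xₙ^p⟩^{p^{s-1}}`, for every `k`-algebra automorphism `σ` of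
`R_s`, the determinant of the Jacobian matrix `(∂_j σ(x̄_i))` (computed via any lifts to
the polynomial ring) is invertible in `R_s`. -/
theorem stmt_2 (k : Type*) [Field k] (p : ℕ) [Fact p.Prime] [CharP k p]
    (n s : ℕ) (hs : 1 ≤ s) (I : Ideal (MvPolynomial (Fin n) k))
    (hI : I = (Ideal.span (Set.range fun i : Fin n =>
      (X i : MvPolynomial (Fin n) k) ^ p)) ^ (p ^ (s - 1)))
    (σ : (MvPolynomial (Fin n) k ⧸ I) ≃ₐ[k] (MvPolynomial (Fin n) k ⧸ I)) :
    ∀ P : Fin n → MvPolynomial (Fin n) k,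
      (∀ i, Ideal.Quotient.mk I (P i) = σ (Ideal.Quotient.mk I (X i))) →
      IsUnit (Matrix.det
        (Matrix.of fun i j : Fin n => Ideal.Quotient.mk I (pderiv j (P i)))) := by
  intro P hP
  have hp : p.Prime := Fact.out
  set J : Ideal (MvPolynomial (Fin n) k) :=
    Ideal.span (Set.range fun i : Fin n => (X i : MvPolynomial (Fin n) k) ^ p) with hJ
  have hN : p ^ (s - 1) ≠ 0 := pow_ne_zero _ hp.ne_zero
  have hIJ : I ≤ J := by rw [hI]; exact Ideal.pow_le_self hN
  -- p = 0 in the polynomial ring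
  have hpzero : ((p : MvPolynomial (Fin n) k)) = 0 := by
    have : ((p : k)) = 0 := CharP.cast_eq_zero k p
    rw [← C_eq_coe_nat, this, map_zero]
  -- pderiv maps J into J
  have hpd : ∀ (j : Fin n) (f : MvPolynomial (Fin n) k), f ∈ J → pderiv j f ∈ J := by
    intro j f hf
    refine Submodule.span_induction ?_ ?_ ?_ ?_ hf
    · rintro _ ⟨i, rfl⟩
      rw [pderiv_pow, hpzero]
      simpa using J.zero_mem
    · simpa using J.zero_mem
    · intro x y _ _ px py
      rw [map_add]; exact J.add_mem px py
    · intro a x hx px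
      rw [smul_eq_mul, pderiv_mul]
      exact J.add_mem (Ideal.mul_mem_left J _ hx) (Ideal.mul_mem_left J _ px)
  -- evaluation at 0
  set ε : MvPolynomial (Fin n) k →ₐ[k] k := aeval (0 : Fin n → k) with hε
  have hεJ : ∀ f ∈ J, ε f = 0 := by
    intro f hf
    refine Submodule.span_induction ?_ ?_ ?_ ?_ hf
    · rintro _ ⟨i, rfl⟩
      simp [hε, zero_pow hp.ne_zero]
    · simp
    · intro x y _ _ px py; rw [map_add, px, py, add_zero]
    · intro a x _ px; rw [smul_eq_mul, map_mul, px, mul_zero]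
  have hεI : ∀ f ∈ I, ε f = 0 := fun f hf => hεJ f (hIJ hf)
  set εq : (MvPolynomial (Fin n) k ⧸ I) →ₐ[k] k := Ideal.Quotient.liftₐ I ε hεI with hεq
  have hεq_mk : ∀ f, εq (Ideal.Quotient.mk I f) = ε f := by
    intro f
    rw [hεq, Ideal.Quotient.liftₐ_apply]
    rfl
  -- each x̄ᵢ is nilpotent
  have hXnil : ∀ i : Fin n, IsNilpotent (Ideal.Quotient.mk I (X i : MvPolynomial (Fin n) k)) := by
    intro i
    refine ⟨p * p ^ (s - 1), ?_⟩
    rw [← map_pow, Ideal.Quotient.eq_zero_iff_mem, hI, pow_mul]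
    exact Ideal.pow_mem_pow (Ideal.subset_span (Set.mem_range_self i)) _
  -- any element of the quotient with nonzero εq is a unit
  have hUnit : ∀ y : MvPolynomial (Fin n) k ⧸ I, εq y ≠ 0 → IsUnit y := by
    intro y hy
    have hker : ∀ z : MvPolynomial (Fin n) k ⧸ I, εq z = 0 → IsNilpotent z := by
      intro z hz
      obtain ⟨g, rfl⟩ := Ideal.Quotient.mk_surjective z
      rw [hεq_mk] at hz
      have hconst : constantCoeff g = 0 := by
        have : ε g = constantCoeff g := by simp [hε, aeval_zero]
        rw [this] at hz; exact hz
      have hmem : g ∈ Ideal.span (MvPolynomial.X '' (Set.univ : Set (Fin n)) :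
          Set (MvPolynomial (Fin n) k)) := by
        rw [mem_ideal_span_X_image]
        intro m hm
        rcases Finsupp.ne_iff.1 (fun h : m = 0 => by
          rw [mem_support_iff] at hm
          exact hm (by rw [h]; exact hconst)) with ⟨i, hi⟩
        exact ⟨i, Set.mem_univ i, by simpa using hi⟩
      have : Ideal.Quotient.mk I g ∈ nilradical (MvPolynomial (Fin n) k ⧸ I) := by
        have hle : Ideal.map (Ideal.Quotient.mk I)
            (Ideal.span (MvPolynomial.X '' (Set.univ : Set (Fin n)) :
              Set (MvPolynomial (Fin n) k))) ≤ nilradical _ := by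
          rw [Ideal.map_span, Ideal.span_le]
          rintro _ ⟨_, ⟨i, -, rfl⟩, rfl⟩
          exact mem_nilradical.2 (hXnil i)
        exact hle (Ideal.mem_map_of_mem _ hmem)
      exact mem_nilradical.1 this
    have h1 : IsNilpotent (y - algebraMap k _ (εq y)) := by
      refine hker _ ?_
      rw [map_sub, AlgHom.commutes]
      simp
    have h2 : IsUnit (algebraMap k (MvPolynomial (Fin n) k ⧸ I) (εq y)) :=
      (isUnit_iff_ne_zero.2 hy).map (algebraMap k _)
    have := h1.isUnit_add_right_of_commute h2 (Commute.all _ _)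
    simpa using this
  -- choose lifts for σ⁻¹
  choose Q hQ using fun j : Fin n =>
    Ideal.Quotient.mk_surjective (I := I) (σ.symm (Ideal.Quotient.mk I (X j)))
  -- nilpotency ⇒ ε of lifts vanishes
  have hεnil : ∀ g : MvPolynomial (Fin n) k,
      IsNilpotent (Ideal.Quotient.mk I g) → ε g = 0 := by
    intro g hg
    have : IsNilpotent (εq (Ideal.Quotient.mk I g)) := hg.map εq
    rw [hεq_mk] at this
    exact this.eq_zero
  have hPε : ∀ i, ε (P i) = 0 := by
    intro i
    exact hεnil _ (by rw [hP i]; exact (hXnil i).map σ)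
  have hQε : ∀ j, ε (Q j) = 0 := by
    intro j
    exact hεnil _ (by rw [hQ j]; exact (hXnil j).map σ.symm)
  -- mk ∘ aeval Q = σ.symm ∘ mk
  have hmk_aeval : ∀ f : MvPolynomial (Fin n) k,
      Ideal.Quotient.mk I (aeval Q f) = σ.symm (Ideal.Quotient.mk I f) := by
    intro f
    have e1 : Ideal.Quotient.mk I (aeval Q f)
        = aeval (fun j => Ideal.Quotient.mk I (Q j)) f := by
      rw [show (Ideal.Quotient.mk I : MvPolynomial (Fin n) k →+*  _) (aeval Q f)
        = (Ideal.Quotient.mkₐ k I) (aeval Q f) from rfl, comp_aeval_apply]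
      simp [Ideal.Quotient.mkₐ_eq_mk]
    have hQfun : (fun j => Ideal.Quotient.mk I (Q j))
        = fun j => σ.symm.toAlgHom (Ideal.Quotient.mk I (X j : MvPolynomial (Fin n) k)) :=
      funext fun j => hQ j
    have e2 : aeval (fun j => Ideal.Quotient.mk I (Q j)) f
        = σ.symm.toAlgHom (aeval (fun j => Ideal.Quotient.mk I (X j : MvPolynomial (Fin n) k)) f) := by
      rw [hQfun, comp_aeval_apply]
    have e3 : aeval (fun j => Ideal.Quotient.mk I (X j : MvPolynomial (Fin n) k)) f
        = Ideal.Quotient.mk I f := by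
      rw [show (fun j => Ideal.Quotient.mk I (X j : MvPolynomial (Fin n) k))
        = fun j => (Ideal.Quotient.mkₐ k I) (X j) from rfl, ← comp_aeval_apply,
        aeval_X_left_apply, Ideal.Quotient.mkₐ_eq_mk]
    rw [e1, e2, e3]; rfl
  -- composite ≡ identity
  have hcomp : ∀ i, Ideal.Quotient.mk I (aeval Q (P i)) = Ideal.Quotient.mk I (X i) := by
    intro i
    rw [hmk_aeval, hP i, AlgEquiv.symm_apply_apply]
  -- the scalar matrices
  set A : Matrix (Fin n) (Fin n) k := Matrix.of fun i l => ε (pderiv l (P i)) with hA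
  set B : Matrix (Fin n) (Fin n) k := Matrix.of fun l j => ε (pderiv j (Q l)) with hB
  have hAB : A * B = 1 := by
    ext i j
    rw [Matrix.mul_apply]
    have key : ε (pderiv j (aeval Q (P i))) = ∑ l, ε (pderiv l (P i)) * ε (pderiv j (Q l)) := by
      rw [pderiv_aeval_sum, map_sum]
      refine Finset.sum_congr rfl fun l _ => ?_
      rw [map_mul]
      congr 1
      rw [comp_aeval_apply]
      have : (fun j => ε (Q j)) = (0 : Fin n → k) := funext fun j => hQε j
      rw [this]
    have key2 : ε (pderiv j (aeval Q (P i))) = if i = j then 1 else 0 := by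
      have hmem : aeval Q (P i) - X i ∈ I := Ideal.Quotient.eq.1 (hcomp i)
      have : ε (pderiv j (aeval Q (P i) - X i)) = 0 :=
        hεJ _ (hpd j _ (hIJ hmem))
      rw [map_sub, map_sub] at this
      have := sub_eq_zero.1 this
      rw [this, pderiv_X]
      rcases eq_or_ne i j with rfl | hij
      · simp
      · rw [Pi.single_eq_of_ne hij]
        simp [hij]
    simp only [hA, hB, Matrix.of_apply]
    rw [← key, key2, Matrix.one_apply]
  have hdetA : IsUnit A.det :=
    IsUnit.of_mul_eq_one (a := A.det) B.det (by rw [← Matrix.det_mul, hAB, Matrix.det_one])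
  -- transfer to the quotient
  set M : Matrix (Fin n) (Fin n) (MvPolynomial (Fin n) k ⧸ I) :=
    Matrix.of fun i j : Fin n => Ideal.Quotient.mk I (pderiv j (P i)) with hM
  apply hUnit
  have : εq M.det = A.det := by
    have hmap : M.map ((εq : (MvPolynomial (Fin n) k ⧸ I) →+* k) : (MvPolynomial (Fin n) k ⧸ I) → k) = A := by
      ext i j
      simp [hM, hA, Matrix.map_apply, hεq_mk]
    rw [show εq M.det = (εq : _ →+* k) M.det from rfl, RingHom.map_det,
      RingHom.mapMatrix_apply, hmap]
  rw [this]
  exact hdetA.ne_zero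
end

section
/- Let k be a field of characteristic p > 0 and R_s = k[x_1,...,x_n]/⟨x_1^p,...,x_n^p⟩^{p^{s-1}}. A k-algebra endomorphism σ of R_s is an automorphism if and only if σ preserves the ideal m̄ generated by the images of x_1,...,x_n and det(J(σ)) is invertible in R_s. -/
open MvPolynomial

set_option maxHeartbeats 1600000
set_option synthInstance.maxHeartbeats 400000

section MyAux


theorem my_chain {k : Type*} [CommRing k] {m n : ℕ}
    (f : Fin m → MvPolynomial (Fin n) k) (φ : MvPolynomial (Fin m) k) (j : Fin n) :
    pderiv j (aeval f φ) = ∑ i, aeval f (pderiv i φ) * pderiv j (f i) := by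
  induction φ using MvPolynomial.induction_on with
  | C a => simp
  | add u v hu hv =>
    simp only [map_add, hu, hv, add_mul, Finset.sum_add_distrib]
  | mul_X u i hu =>
    simp only [map_mul, aeval_X, Derivation.leibniz, smul_eq_mul, map_add, map_sum, pderiv_X,
      Pi.single_apply, apply_ite (aeval f), map_one, map_zero, hu, add_mul,
      Finset.sum_add_distrib, ite_mul, one_mul, zero_mul, mul_ite, mul_zero, mul_one]
    rw [Finset.sum_ite_eq Finset.univ i fun x => aeval f u * pderiv j (f x)]
    simp [Finset.mul_sum, mul_assoc, add_comm]

theorem my_cc_pderiv {k : Type*} [CommRing k] {n : ℕ} (f : MvPolynomial (Fin n) k) (j : Fin n) :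
    constantCoeff (pderiv j f) = coeff (Finsupp.single j 1) f := by
  conv_rhs => rw [as_sum f]
  conv_lhs => rw [as_sum f]
  rw [map_sum, map_sum, coeff_sum]
  refine Finset.sum_congr rfl fun d _ => ?_
  rw [pderiv_monomial, constantCoeff_monomial, coeff_monomial]
  by_cases hd : d = Finsupp.single j 1
  · subst hd; simp
  · rw [if_neg hd]
    by_cases hz : d - Finsupp.single j 1 = 0
    · rw [if_pos hz]
      have hdj : d j = 0 := by
        by_contra hdj
        apply hd
        ext i
        have hle : d i ≤ (Finsupp.single j 1) i := by
          have := DFunLike.congr_fun hz i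
          simp only [Finsupp.tsub_apply, Finsupp.coe_zero, Pi.zero_apply] at this
          omega
        by_cases hij : i = j
        · subst hij
          simp only [Finsupp.single_eq_same] at hle ⊢
          omega
        · simp only [Finsupp.single_eq_of_ne' (Ne.symm hij)] at hle ⊢
          omega
      rw [hdj]; simp
    · rw [if_neg hz]

theorem my_mem_span_X {k : Type*} [CommRing k] {n : ℕ} (f : MvPolynomial (Fin n) k)
    (h : constantCoeff f = 0) :
    f ∈ Ideal.span (Set.range (X : Fin n → MvPolynomial (Fin n) k)) := by
  have := @mem_ideal_span_X_image (Fin n) k _ f Set.univ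
  rw [Set.image_univ] at this
  rw [this]
  intro d hd
  by_contra hc
  push_neg at hc
  have hd0 : d = 0 := by
    ext i; simpa using hc i (Set.mem_univ i)
  rw [mem_support_iff, hd0] at hd
  exact hd h

theorem my_taylor {k : Type*} [CommRing k] {n : ℕ} (f : MvPolynomial (Fin n) k)
    (h0 : coeff 0 f = 0) (h1 : ∀ j, coeff (Finsupp.single j 1) f = 0) :
    f ∈ (Ideal.span (Set.range (X : Fin n → MvPolynomial (Fin n) k))) ^ 2 := by
  nth_rewrite 1 [as_sum f]
  refine Ideal.sum_mem _ fun d hd => ?_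
  rw [mem_support_iff] at hd
  have hdne : d ≠ 0 := by rintro rfl; exact hd h0
  obtain ⟨j, hj⟩ := Finsupp.support_nonempty_iff.2 hdne
  rw [Finsupp.mem_support_iff] at hj
  have key : ∃ j l : Fin n, Finsupp.single j 1 + Finsupp.single l 1 ≤ d := by
    by_cases h2 : 2 ≤ d j
    · refine ⟨j, j, fun i => ?_⟩
      simp only [Finsupp.add_apply, Finsupp.single_apply]
      rcases eq_or_ne j i with rfl | hne
      · simpa using h2
      · simp [hne]
    · have hdj1 : d j = 1 := by omega
      have hdns : d ≠ Finsupp.single j 1 := by rintro rfl; exact hd (h1 j)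
      obtain ⟨l, hl⟩ : ∃ l, d l ≠ (Finsupp.single j 1) l := by
        by_contra hc; push_neg at hc; exact hdns (Finsupp.ext hc)
      have hlj : l ≠ j := by rintro rfl; simp [hdj1] at hl
      have hdl : d l ≠ 0 := by simpa [Finsupp.single_apply, (Ne.symm hlj)] using hl
      refine ⟨j, l, fun i => ?_⟩
      simp only [Finsupp.add_apply, Finsupp.single_apply]
      rcases eq_or_ne j i with rfl | hne
      · rcases eq_or_ne l j with rfl | hne2
        · exact absurd rfl hlj
        · simp [hne2]; omega
      · rcases eq_or_ne l i with rfl | hne2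
        · simp [hne]; omega
        · simp [hne, hne2]
  obtain ⟨a, b, hab⟩ := key
  have hrw : (monomial d) (coeff d f) =
      X a * (X b * monomial (d - (Finsupp.single a 1 + Finsupp.single b 1)) (coeff d f)) := by
    rw [← pow_one (X a : MvPolynomial (Fin n) k), ← pow_one (X b : MvPolynomial (Fin n) k),
      X_pow_eq_monomial, X_pow_eq_monomial, monomial_mul, monomial_mul, one_mul, one_mul,
      ← add_assoc, add_tsub_cancel_of_le hab]
  rw [hrw, sq]
  exact Ideal.mul_mem_mul (Ideal.subset_span ⟨a, rfl⟩)
    (Ideal.mul_mem_right _ _ (Ideal.subset_span ⟨b, rfl⟩))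

theorem my_pderiv_span {k : Type*} [CommRing k] {n : ℕ} (S : Set (MvPolynomial (Fin n) k))
    (j : Fin n) (hS : ∀ g ∈ S, pderiv j g ∈ Ideal.span S) :
    ∀ f ∈ Ideal.span S, pderiv j f ∈ Ideal.span S := by
  intro f hf
  induction hf using Submodule.span_induction with
  | mem x hx => exact hS x hx
  | zero => simp
  | add x y _ _ hx hy => rw [map_add]; exact Ideal.add_mem _ hx hy
  | smul a x hx hx' =>
    rw [smul_eq_mul, Derivation.leibniz, smul_eq_mul, smul_eq_mul]
    exact Ideal.add_mem _ (Ideal.mul_mem_left _ _ hx') (Ideal.mul_mem_right _ _ hx)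

theorem my_pderiv_pow {k : Type*} [CommRing k] {n : ℕ} (S : Set (MvPolynomial (Fin n) k))
    (j : Fin n) (hS : ∀ g ∈ S, pderiv j g ∈ Ideal.span S) :
    ∀ e : ℕ, ∀ f ∈ (Ideal.span S) ^ e, pderiv j f ∈ (Ideal.span S) ^ e := by
  intro e
  induction e with
  | zero => intro f _; simp [Ideal.one_eq_top]
  | succ e ih =>
    intro f hf
    rw [pow_succ] at hf ⊢
    refine Submodule.mul_induction_on hf (fun a ha b hb => ?_) (fun x y hx hy => ?_)
    · rw [Derivation.leibniz, smul_eq_mul, smul_eq_mul, mul_comm b ((pderiv j) a)]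
      exact Ideal.add_mem _ (Ideal.mul_mem_mul ha (my_pderiv_span S j hS b hb))
        (Ideal.mul_mem_mul (ih a ha) hb)
    · rw [map_add]; exact Ideal.add_mem _ hx hy

theorem my_map_pow_span {k : Type*} [CommRing k] {n : ℕ} (S : Set (MvPolynomial (Fin n) k))
    (φ : MvPolynomial (Fin n) k →+* MvPolynomial (Fin n) k)
    (hS : ∀ g ∈ S, φ g ∈ Ideal.span S) :
    ∀ e : ℕ, ∀ f ∈ (Ideal.span S) ^ e, φ f ∈ (Ideal.span S) ^ e := by
  intro e f hf
  have h1 : Ideal.map φ (Ideal.span S) ≤ Ideal.span S := by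
    rw [Ideal.map_span, Ideal.span_le]
    rintro _ ⟨g, hg, rfl⟩
    exact hS g hg
  have : φ f ∈ Ideal.map φ ((Ideal.span S) ^ e) := Ideal.mem_map_of_mem _ hf
  rw [Ideal.map_pow] at this
  exact Ideal.pow_right_mono h1 e this



variable {k : Type*} [Field k] {p : ℕ} [Fact p.Prime] {n s : ℕ}

theorem myI_cc (I : Ideal (MvPolynomial (Fin n) k))
    (hI : I = (Ideal.span (Set.range fun i : Fin n =>
      (X i : MvPolynomial (Fin n) k) ^ p)) ^ (p ^ (s - 1))) :
    ∀ f ∈ I, constantCoeff f = 0 := by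
  intro f hf
  have hp : p ≠ 0 := (Fact.out : p.Prime).ne_zero
  have he : p ^ (s - 1) ≠ 0 := pow_ne_zero _ hp
  rw [hI] at hf
  have hf' := Ideal.pow_le_self he hf
  have hle : Ideal.span (Set.range fun i : Fin n => (X i : MvPolynomial (Fin n) k) ^ p) ≤
      RingHom.ker (constantCoeff : MvPolynomial (Fin n) k →+* k) := by
    rw [Ideal.span_le]
    rintro _ ⟨i, rfl⟩
    simp [RingHom.mem_ker, zero_pow hp]
  exact hle hf'

theorem myI_one_not_mem (I : Ideal (MvPolynomial (Fin n) k))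
    (hI : I = (Ideal.span (Set.range fun i : Fin n =>
      (X i : MvPolynomial (Fin n) k) ^ p)) ^ (p ^ (s - 1))) : I ≠ ⊤ := by
  intro h
  have := myI_cc I hI 1 (h ▸ Submodule.mem_top)
  simp at this

theorem myI_Xpow (hs : 1 ≤ s) (I : Ideal (MvPolynomial (Fin n) k))
    (hI : I = (Ideal.span (Set.range fun i : Fin n =>
      (X i : MvPolynomial (Fin n) k) ^ p)) ^ (p ^ (s - 1))) (i : Fin n) :
    (X i : MvPolynomial (Fin n) k) ^ (p ^ s) ∈ I := by
  have hps : p ^ s = p * p ^ (s - 1) := by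
    conv_lhs => rw [show s = 1 + (s - 1) by omega]
    rw [pow_add, pow_one]
  rw [hps, pow_mul, hI]
  exact Ideal.pow_mem_pow (Ideal.subset_span (Set.mem_range_self i)) _

theorem myJ_le_nilradical (hs : 1 ≤ s) (I : Ideal (MvPolynomial (Fin n) k))
    (hI : I = (Ideal.span (Set.range fun i : Fin n =>
      (X i : MvPolynomial (Fin n) k) ^ p)) ^ (p ^ (s - 1))) :
    Ideal.span (Set.range fun i : Fin n => Ideal.Quotient.mk I (X i)) ≤
      nilradical (MvPolynomial (Fin n) k ⧸ I) := by
  rw [Ideal.span_le]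
  rintro _ ⟨i, rfl⟩
  refine mem_nilradical.2 ⟨p ^ s, ?_⟩
  rw [← map_pow, Ideal.Quotient.eq_zero_iff_mem]
  exact myI_Xpow hs I hI i

theorem myJ_nilpotent (hs : 1 ≤ s) (I : Ideal (MvPolynomial (Fin n) k))
    (hI : I = (Ideal.span (Set.range fun i : Fin n =>
      (X i : MvPolynomial (Fin n) k) ^ p)) ^ (p ^ (s - 1))) :
    ∃ N : ℕ, (Ideal.span (Set.range fun i : Fin n => Ideal.Quotient.mk I (X i))) ^ N = ⊥ := by
  obtain ⟨N, hN⟩ := IsNoetherianRing.isNilpotent_nilradical (MvPolynomial (Fin n) k ⧸ I)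
  refine ⟨N, ?_⟩
  have h1 := Ideal.pow_right_mono (myJ_le_nilradical hs I hI) N
  rw [hN] at h1
  simpa using h1

theorem myJ_eq_map (I : Ideal (MvPolynomial (Fin n) k)) :
    Ideal.span (Set.range fun i : Fin n => Ideal.Quotient.mk I (X i)) =
      Ideal.map (Ideal.Quotient.mk I)
        (Ideal.span (Set.range (X : Fin n → MvPolynomial (Fin n) k))) := by
  rw [Ideal.map_span, ← Set.range_comp]
  rfl

theorem myNil_mem (hs : 1 ≤ s) (I : Ideal (MvPolynomial (Fin n) k))
    (hI : I = (Ideal.span (Set.range fun i : Fin n =>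
      (X i : MvPolynomial (Fin n) k) ^ p)) ^ (p ^ (s - 1)))
    (r : MvPolynomial (Fin n) k ⧸ I) (hr : IsNilpotent r) :
    r ∈ Ideal.span (Set.range fun i : Fin n => Ideal.Quotient.mk I (X i)) := by
  haveI : Nontrivial (MvPolynomial (Fin n) k ⧸ I) :=
    Ideal.Quotient.nontrivial_iff.mpr (myI_one_not_mem I hI)
  obtain ⟨f, rfl⟩ := Ideal.Quotient.mk_surjective r
  have hg : f - C (constantCoeff f) ∈
      Ideal.span (Set.range (X : Fin n → MvPolynomial (Fin n) k)) :=
    my_mem_span_X _ (by simp)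
  have hπg : Ideal.Quotient.mk I (f - C (constantCoeff f)) ∈
      Ideal.span (Set.range fun i : Fin n => Ideal.Quotient.mk I (X i)) := by
    rw [myJ_eq_map]
    exact Ideal.mem_map_of_mem _ hg
  have hnilg : IsNilpotent (Ideal.Quotient.mk I (f - C (constantCoeff f))) :=
    myJ_le_nilradical hs I hI hπg
  have hkey : (algebraMap k (MvPolynomial (Fin n) k ⧸ I)) (constantCoeff f) =
      Ideal.Quotient.mk I f - Ideal.Quotient.mk I (f - C (constantCoeff f)) := by
    rw [map_sub, sub_sub_cancel, ← MvPolynomial.algebraMap_eq, Ideal.Quotient.mk_algebraMap]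
  have hnilc : IsNilpotent ((algebraMap k (MvPolynomial (Fin n) k ⧸ I)) (constantCoeff f)) := by
    rw [hkey]
    exact Ideal.sub_mem _ (mem_nilradical.2 hr) (mem_nilradical.2 hnilg)
  have hc0 : constantCoeff f = 0 := by
    obtain ⟨m, hm⟩ := hnilc
    have hz : constantCoeff f ^ m = 0 := by
      apply (algebraMap k (MvPolynomial (Fin n) k ⧸ I)).injective
      rw [map_zero, map_pow]; exact hm
    by_contra hc
    exact pow_ne_zero m hc hz
  have : Ideal.Quotient.mk I f = Ideal.Quotient.mk I (f - C (constantCoeff f)) := by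
    rw [hc0]; simp
  rw [this]
  exact hπg



variable {k : Type*} [CommRing k] {n : ℕ}

-- constant coefficient of elements of span of X's
theorem myspan_cc (f : MvPolynomial (Fin n) k)
    (hf : f ∈ Ideal.span (Set.range (X : Fin n → MvPolynomial (Fin n) k))) :
    constantCoeff f = 0 := by
  have hle : Ideal.span (Set.range (X : Fin n → MvPolynomial (Fin n) k)) ≤
      RingHom.ker (constantCoeff : MvPolynomial (Fin n) k →+* k) := by
    rw [Ideal.span_le]; rintro _ ⟨i, rfl⟩; simp [RingHom.mem_ker]
  exact hle hf

theorem my_coeff_lin0 (c : Fin n → k) :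
    coeff 0 (∑ l, c l • (X l : MvPolynomial (Fin n) k)) = 0 := by
  rw [coeff_sum]
  refine Finset.sum_eq_zero fun l _ => ?_
  rw [coeff_smul, coeff_zero_X, smul_zero]

theorem my_coeff_lin1 (c : Fin n → k) (j : Fin n) :
    coeff (Finsupp.single j 1) (∑ l, c l • (X l : MvPolynomial (Fin n) k)) = c j := by
  rw [coeff_sum]
  have : ∀ l : Fin n, coeff (Finsupp.single j 1) (c l • (X l : MvPolynomial (Fin n) k)) =
      if l = j then c l else 0 := by
    intro l
    rw [coeff_smul, coeff_X']
    by_cases h : l = j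
    · subst h; simp
    · rw [if_neg, if_neg h, smul_zero]
      intro hc
      exact h (by
        have := DFunLike.congr_fun hc l
        simp [Finsupp.single_apply] at this
        by_contra hne
        simp [Ne.symm hne, (show ¬ j = l from fun e => hne e.symm)] at this)
  simp only [this]
  simp

theorem my_lin_comp (u v : Matrix (Fin n) (Fin n) k) (huv : u * v = 1) (i : Fin n) :
    aeval (fun l => ∑ m, v l m • (X m : MvPolynomial (Fin n) k))
      (∑ j, u i j • (X j : MvPolynomial (Fin n) k)) = X i := by
  rw [map_sum]
  simp only [map_smul, aeval_X]
  calc ∑ j, u i j • ∑ m, v j m • (X m : MvPolynomial (Fin n) k)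
      = ∑ j, ∑ m, (u i j * v j m) • (X m : MvPolynomial (Fin n) k) := by
        simp [Finset.smul_sum, smul_smul]
    _ = ∑ m, (∑ j, u i j * v j m) • (X m : MvPolynomial (Fin n) k) := by
        rw [Finset.sum_comm]
        simp [Finset.sum_smul]
    _ = X i := by
        have hm : ∀ m, (∑ j, u i j * v j m) = if i = m then 1 else 0 := fun m => by
          rw [← Matrix.mul_apply, huv, Matrix.one_apply]
        simp only [hm, ite_smul, one_smul, zero_smul]
        rw [Finset.sum_ite_eq]
        simp

theorem my_lift_eq (I : Ideal (MvPolynomial (Fin n) k))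
    (σ : (MvPolynomial (Fin n) k ⧸ I) →ₐ[k] (MvPolynomial (Fin n) k ⧸ I))
    (P : Fin n → MvPolynomial (Fin n) k)
    (hP : ∀ i, Ideal.Quotient.mk I (P i) = σ (Ideal.Quotient.mk I (X i)))
    (f : MvPolynomial (Fin n) k) :
    σ (Ideal.Quotient.mk I f) = Ideal.Quotient.mk I (aeval P f) := by
  have h : σ.comp (Ideal.Quotient.mkₐ k I) = (Ideal.Quotient.mkₐ k I).comp (aeval P) := by
    apply MvPolynomial.algHom_ext
    intro i
    simp [← hP i, Ideal.Quotient.mkₐ_eq_mk]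
  have := AlgHom.congr_fun h f
  simpa [Ideal.Quotient.mkₐ_eq_mk] using this

theorem my_unipotent {R : Type*} [CommRing R] [Algebra k R] (T : R →ₐ[k] R) (g : Fin n → R)
    (hgen : ∀ r : R, ∃ c : k, r - algebraMap k R c ∈ Ideal.span (Set.range g))
    (hT : ∀ i, T (g i) - g i ∈ (Ideal.span (Set.range g)) ^ 2)
    (hTJ : ∀ x ∈ Ideal.span (Set.range g), T x ∈ Ideal.span (Set.range g))
    (hN : ∃ N, (Ideal.span (Set.range g)) ^ N = ⊥) : Function.Bijective T := by
  set J : Ideal R := Ideal.span (Set.range g) with hJ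
  have Cl0 : ∀ r : R, T r - r ∈ J := by
    intro r
    obtain ⟨c, hc⟩ := hgen r
    have : T r - r = T (r - algebraMap k R c) - (r - algebraMap k R c) := by
      rw [map_sub, AlgHom.commutes]; ring
    rw [this]
    exact Ideal.sub_mem _ (hTJ _ hc) hc
  have Cl1 : ∀ x ∈ J, T x - x ∈ J ^ 2 := by
    intro x hx
    induction hx using Submodule.span_induction with
    | mem y hy =>
      obtain ⟨i, rfl⟩ := hy
      exact hT i
    | zero => simp
    | add u v hu hv ihu ihv =>
      have : T (u + v) - (u + v) = (T u - u) + (T v - v) := by rw [map_add]; ring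
      rw [this]; exact Ideal.add_mem _ ihu ihv
    | smul r x hx ih =>
      have : T (r • x) - r • x = (T r - r) * T x + r * (T x - x) := by
        rw [smul_eq_mul, map_mul]; ring
      rw [this, sq]
      refine Ideal.add_mem _ (Ideal.mul_mem_mul (Cl0 r) (hTJ x hx)) ?_
      rw [← sq]
      exact Ideal.mul_mem_left _ _ ih
  have ClT : ∀ t : ℕ, ∀ x ∈ J ^ (t + 1), T x - x ∈ J ^ (t + 2) := by
    intro t
    induction t with
    | zero => simpa [pow_one] using fun x hx => Cl1 x hx
    | succ t ih =>
      intro x hx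
      rw [pow_succ] at hx
      refine Submodule.mul_induction_on hx (fun a ha b hb => ?_) (fun u v hu hv => ?_)
      · have : T (a * b) - a * b = (T a - a) * T b + a * (T b - b) := by
          rw [map_mul]; ring
        rw [this]
        refine Ideal.add_mem _ ?_ ?_
        · have := Ideal.mul_mem_mul (ih a ha) (hTJ b hb)
          rwa [← pow_succ] at this
        · have := Ideal.mul_mem_mul ha (Cl1 b hb)
          rwa [← pow_add] at this
      · have : T (u + v) - (u + v) = (T u - u) + (T v - v) := by rw [map_add]; ring
        rw [this]; exact Ideal.add_mem _ hu hv
  set δ : Module.End k R := T.toLinearMap - 1 with hδdef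
  have hδ : ∀ t : ℕ, ∀ x ∈ J ^ t, δ x ∈ J ^ (t + 1) := by
    intro t x hx
    have hδx : δ x = T x - x := rfl
    match t with
    | 0 => rw [hδx, pow_one]; exact Cl0 x
    | Nat.succ t => rw [hδx]; exact ClT t x hx
  have hδpow : ∀ m : ℕ, ∀ x : R, (δ ^ m) x ∈ J ^ m := by
    intro m
    induction m with
    | zero => intro x; simp [Ideal.one_eq_top]
    | succ m ih =>
      intro x
      have hx : (δ ^ (m + 1)) x = δ ((δ ^ m) x) := by
        rw [pow_succ', Module.End.mul_apply]
      rw [hx]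
      exact hδ m _ (ih x)
  obtain ⟨N, hN⟩ := hN
  have hδN : δ ^ N = 0 := by
    ext x
    have hx := hδpow N x
    rw [hN] at hx
    simpa using hx
  have hunit : IsUnit (T.toLinearMap : Module.End k R) := by
    have heq : (T.toLinearMap : Module.End k R) = 1 + δ := by
      rw [hδdef, add_comm, sub_add_cancel]
    rw [heq]
    exact IsNilpotent.isUnit_add_left_of_commute ⟨N, hδN⟩ isUnit_one (Commute.one_right δ)
  exact (Module.End.isUnit_iff (T.toLinearMap : Module.End k R)).mp hunit


theorem myI_pderiv {k : Type*} [Field k] {p : ℕ} [Fact p.Prime] [CharP k p] {n s : ℕ}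
    (I : Ideal (MvPolynomial (Fin n) k))
    (hI : I = (Ideal.span (Set.range fun i : Fin n =>
      (X i : MvPolynomial (Fin n) k) ^ p)) ^ (p ^ (s - 1))) (j : Fin n) :
    ∀ f ∈ I, pderiv j f ∈ I := by
  intro f hf
  rw [hI] at hf ⊢
  refine my_pderiv_pow _ j ?_ _ f hf
  rintro _ ⟨i, rfl⟩
  have : pderiv j ((X i : MvPolynomial (Fin n) k) ^ p) = 0 := by
    rw [Derivation.leibniz_pow, nsmul_eq_mul, CharP.cast_eq_zero (MvPolynomial (Fin n) k) p,
      zero_mul]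
  rw [this]
  exact Ideal.zero_mem _

end MyAux

/-- For `k` a field of characteristic `p > 0` and
`R_s = k[x₁,…,xₙ]/⟨x₁^p,…,xₙ^p⟩^{p^{s-1}}`, a `k`-algebra endomorphism `σ` of `R_s` is an
automorphism iff it preserves the ideal `m̄` generated by the images of the variables and
the determinant of its Jacobian matrix (via lifts) is invertible in `R_s`. -/
theorem stmt_3 (k : Type*) [Field k] (p : ℕ) [Fact p.Prime] [CharP k p]
    (n s : ℕ) (hs : 1 ≤ s) (I : Ideal (MvPolynomial (Fin n) k))
    (hI : I = (Ideal.span (Set.range fun i : Fin n =>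
      (X i : MvPolynomial (Fin n) k) ^ p)) ^ (p ^ (s - 1)))
    (σ : (MvPolynomial (Fin n) k ⧸ I) →ₐ[k] (MvPolynomial (Fin n) k ⧸ I)) :
    Function.Bijective σ ↔
      ((∀ f ∈ Ideal.span (Set.range fun i : Fin n => Ideal.Quotient.mk I (X i)),
          σ f ∈ Ideal.span (Set.range fun i : Fin n => Ideal.Quotient.mk I (X i))) ∧
        ∀ P : Fin n → MvPolynomial (Fin n) k,
          (∀ i, Ideal.Quotient.mk I (P i) = σ (Ideal.Quotient.mk I (X i))) →
          IsUnit (Matrix.det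
            (Matrix.of fun i j : Fin n => Ideal.Quotient.mk I (pderiv j (P i))))) := by
  constructor
  · intro hbij
    constructor
    · -- preservation of the maximal ideal (automatic)
      intro f hf
      exact myNil_mem hs I hI _ (IsNilpotent.map (myJ_le_nilradical hs I hI hf) σ)
    · -- Jacobian determinant is a unit
      intro P hP
      haveI hnt : Nontrivial (MvPolynomial (Fin n) k ⧸ I) :=
        Ideal.Quotient.nontrivial_iff.mpr (myI_one_not_mem I hI)
      let e := AlgEquiv.ofBijective σ hbij
      have hQ0 : ∀ i, ∃ q, Ideal.Quotient.mk I q = e.symm (Ideal.Quotient.mk I (X i)) :=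
        fun i => Ideal.Quotient.mk_surjective _
      choose Q hQ using hQ0
      have hτ : ∀ f, e.symm (Ideal.Quotient.mk I f) = Ideal.Quotient.mk I (aeval Q f) :=
        fun f => my_lift_eq I e.symm.toAlgHom Q hQ f
      have hkey : ∀ i, Ideal.Quotient.mk I (aeval Q (P i)) = Ideal.Quotient.mk I (X i) := by
        intro i
        rw [← hτ (P i), hP i]
        exact e.symm_apply_apply _
      have hdiff : ∀ i j, Ideal.Quotient.mk I (pderiv j (aeval Q (P i))) =
          Ideal.Quotient.mk I (pderiv j (X i)) := by
        intro i j
        rw [Ideal.Quotient.eq, ← map_sub]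
        exact myI_pderiv I hI j _ (Ideal.Quotient.eq.mp (hkey i))
      set D : Matrix (Fin n) (Fin n) (MvPolynomial (Fin n) k ⧸ I) :=
        Matrix.of fun i j : Fin n => Ideal.Quotient.mk I (pderiv j (P i)) with hD
      set M : Matrix (Fin n) (Fin n) (MvPolynomial (Fin n) k ⧸ I) :=
        Matrix.of fun i l : Fin n => Ideal.Quotient.mk I (aeval Q (pderiv l (P i))) with hM
      set N : Matrix (Fin n) (Fin n) (MvPolynomial (Fin n) k ⧸ I) :=
        Matrix.of fun l j : Fin n => Ideal.Quotient.mk I (pderiv j (Q l)) with hN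
      have hMN : M * N = 1 := by
        ext i j
        rw [Matrix.mul_apply, Matrix.one_apply]
        have hterm : ∀ l, M i l * N l j =
            Ideal.Quotient.mk I (aeval Q (pderiv l (P i)) * pderiv j (Q l)) := by
          intro l
          rw [hM, hN]
          simp only [Matrix.of_apply, map_mul]
        rw [Finset.sum_congr rfl fun l _ => hterm l, ← map_sum, ← my_chain Q (P i) j,
          hdiff i j, pderiv_X]
        by_cases hij : i = j
        · subst hij; simp
        · rw [if_neg hij, Pi.single_apply, if_neg hij, map_zero]
      have hdet := congrArg Matrix.det hMN
      rw [Matrix.det_mul, Matrix.det_one] at hdet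
      have hMunit : IsUnit M.det := IsUnit.of_mul_eq_one _ hdet
      have hdeteq : e.symm D.det = M.det := by
        show (e.symm : MvPolynomial (Fin n) k ⧸ I →+* MvPolynomial (Fin n) k ⧸ I) D.det = M.det
        rw [RingHom.map_det]
        congr 1
        ext i l
        rw [hM, hD]
        simp only [RingHom.mapMatrix_apply, Matrix.map_apply, Matrix.of_apply, RingHom.coe_coe]
        exact hτ _
      have hDu : IsUnit (e.symm D.det) := by
        rw [hdeteq]
        exact hMunit
      have := hDu.map e.toAlgHom
      rwa [AlgEquiv.toAlgHom_eq_coe, AlgEquiv.coe_toAlgHom, e.apply_symm_apply] at this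
  · rintro ⟨h1, h2⟩
    haveI hnt : Nontrivial (MvPolynomial (Fin n) k ⧸ I) :=
      Ideal.Quotient.nontrivial_iff.mpr (myI_one_not_mem I hI)
    have hPe : ∀ i, ∃ g ∈ Ideal.span (Set.range (X : Fin n → MvPolynomial (Fin n) k)),
        Ideal.Quotient.mk I g = σ (Ideal.Quotient.mk I (X i)) := by
      intro i
      have hσx : σ (Ideal.Quotient.mk I (X i)) ∈ Ideal.map (Ideal.Quotient.mk I)
          (Ideal.span (Set.range (X : Fin n → MvPolynomial (Fin n) k))) := by
        rw [← myJ_eq_map]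
        refine myNil_mem hs I hI _ ?_
        exact IsNilpotent.map (mem_nilradical.mp (myJ_le_nilradical hs I hI
          (Ideal.subset_span (Set.mem_range_self i)))) σ
      obtain ⟨g, hg1, hg2⟩ := Ideal.mem_image_of_mem_map_of_surjective _
        Ideal.Quotient.mk_surjective hσx
      exact ⟨g, hg1, hg2⟩
    choose P hPm hPmk using hPe
    set a : Matrix (Fin n) (Fin n) k :=
      Matrix.of fun i j => constantCoeff (pderiv j (P i)) with ha
    have hdet := h2 P hPmk
    have hJne : (Ideal.span (Set.range fun i : Fin n => Ideal.Quotient.mk I (X i))) ≠ ⊤ := by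
      intro h
      have h1m : (1 : MvPolynomial (Fin n) k ⧸ I) ∈
          Ideal.span (Set.range fun i : Fin n => Ideal.Quotient.mk I (X i)) := by
        rw [h]; exact Submodule.mem_top
      obtain ⟨m, hm⟩ := mem_nilradical.mp (myJ_le_nilradical hs I hI h1m)
      have h10 : (1 : MvPolynomial (Fin n) k ⧸ I) = 0 := by simpa using hm
      exact one_ne_zero h10
    haveI : Nontrivial ((MvPolynomial (Fin n) k ⧸ I) ⧸
        Ideal.span (Set.range fun i : Fin n => Ideal.Quotient.mk I (X i))) :=
      Ideal.Quotient.nontrivial_iff.mpr hJne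
    -- determinant of linear part is nonzero
    have hdet0 : a.det ≠ 0 := by
      set J := Ideal.span (Set.range fun i : Fin n => Ideal.Quotient.mk I (X i)) with hJdef
      have hDmod : ∀ i j, Ideal.Quotient.mk J (Ideal.Quotient.mk I (pderiv j (P i))) =
          Ideal.Quotient.mk J (algebraMap k (MvPolynomial (Fin n) k ⧸ I) (a i j)) := by
        intro i j
        rw [Ideal.Quotient.eq]
        have heq : Ideal.Quotient.mk I (pderiv j (P i)) -
            algebraMap k (MvPolynomial (Fin n) k ⧸ I) (a i j) =
            Ideal.Quotient.mk I (pderiv j (P i) - C (a i j)) := by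
          rw [map_sub, ← MvPolynomial.algebraMap_eq, Ideal.Quotient.mk_algebraMap]
        rw [heq, hJdef, myJ_eq_map]
        refine Ideal.mem_map_of_mem _ (my_mem_span_X _ ?_)
        simp [ha]
      have hψdet : Ideal.Quotient.mk J
          ((Matrix.of fun i j : Fin n => Ideal.Quotient.mk I (pderiv j (P i))).det) =
          @algebraMap k ((MvPolynomial (Fin n) k ⧸ I) ⧸ J) _ _ (Ideal.Quotient.algebra k) (a.det) := by
        rw [show Ideal.Quotient.mk J
            ((Matrix.of fun i j : Fin n => Ideal.Quotient.mk I (pderiv j (P i))).det) =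
            (Ideal.Quotient.mk J : _ →+* _)
            ((Matrix.of fun i j : Fin n => Ideal.Quotient.mk I (pderiv j (P i))).det) from rfl,
          RingHom.map_det (S := (MvPolynomial (Fin n) k ⧸ I) ⧸ J),
          RingHom.map_det (S := (MvPolynomial (Fin n) k ⧸ I) ⧸ J)]
        congr 1
        ext i j
        simp only [RingHom.mapMatrix_apply, Matrix.map_apply, Matrix.of_apply]
        rw [hDmod i j, Ideal.Quotient.mk_algebraMap]
      intro h0
      have hu := hdet.map (Ideal.Quotient.mk J)
      rw [hψdet, h0, map_zero] at hu
      exact not_isUnit_zero (M₀ := (MvPolynomial (Fin n) k ⧸ I) ⧸ J) hu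
    have hua : IsUnit a.det := Ne.isUnit hdet0
    set b := a⁻¹ with hb
    have hba : b * a = 1 := Matrix.nonsing_inv_mul a hua
    have hab : a * b = 1 := Matrix.mul_nonsing_inv a hua
    -- well-definedness of linear substitutions on the quotient
    have hwd : ∀ v : Matrix (Fin n) (Fin n) k, ∀ f ∈ I,
        aeval (fun l => ∑ m, v l m • (X m : MvPolynomial (Fin n) k)) f ∈ I := by
      intro v f hf
      rw [hI] at hf ⊢
      refine my_map_pow_span _
        ((aeval (fun l => ∑ m, v l m • (X m : MvPolynomial (Fin n) k))).toRingHom) ?_ _ f hf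
      rintro _ ⟨i, rfl⟩
      show aeval (fun l => ∑ m, v l m • (X m : MvPolynomial (Fin n) k)) (X i ^ p) ∈ _
      rw [map_pow, aeval_X, sum_pow_char]
      refine Ideal.sum_mem _ fun m _ => ?_
      rw [smul_pow, MvPolynomial.smul_eq_C_mul]
      exact Ideal.mul_mem_left _ _ (Ideal.subset_span (Set.mem_range_self m))
    have hwdb : ∀ f ∈ I, ((Ideal.Quotient.mkₐ k I).comp
        (aeval fun l => ∑ m, b l m • (X m : MvPolynomial (Fin n) k))) f = 0 := by
      intro f hf
      simp only [AlgHom.comp_apply, Ideal.Quotient.mkₐ_eq_mk]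
      exact Ideal.Quotient.eq_zero_iff_mem.2 (hwd b f hf)
    have hwda : ∀ f ∈ I, ((Ideal.Quotient.mkₐ k I).comp
        (aeval fun l => ∑ m, a l m • (X m : MvPolynomial (Fin n) k))) f = 0 := by
      intro f hf
      simp only [AlgHom.comp_apply, Ideal.Quotient.mkₐ_eq_mk]
      exact Ideal.Quotient.eq_zero_iff_mem.2 (hwd a f hf)
    set lam := Ideal.Quotient.liftₐ I ((Ideal.Quotient.mkₐ k I).comp
      (aeval fun l => ∑ m, b l m • (X m : MvPolynomial (Fin n) k))) hwdb with hlamdef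
    set mu := Ideal.Quotient.liftₐ I ((Ideal.Quotient.mkₐ k I).comp
      (aeval fun l => ∑ m, a l m • (X m : MvPolynomial (Fin n) k))) hwda with hmudef
    have hlam : ∀ f, lam (Ideal.Quotient.mk I f) =
        Ideal.Quotient.mk I (aeval (fun l => ∑ m, b l m • (X m : MvPolynomial (Fin n) k)) f) := by
      intro f
      rw [hlamdef, Ideal.Quotient.liftₐ_apply]
      exact Ideal.Quotient.lift_mk _ _ _
    have hmu : ∀ f, mu (Ideal.Quotient.mk I f) =
        Ideal.Quotient.mk I (aeval (fun l => ∑ m, a l m • (X m : MvPolynomial (Fin n) k)) f) := by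
      intro f
      rw [hmudef, Ideal.Quotient.liftₐ_apply]
      exact Ideal.Quotient.lift_mk _ _ _
    have hcomp : ∀ u v : Matrix (Fin n) (Fin n) k, u * v = 1 →
        ∀ f : MvPolynomial (Fin n) k,
        aeval (fun l => ∑ m, v l m • (X m : MvPolynomial (Fin n) k))
          (aeval (fun l => ∑ m, u l m • (X m : MvPolynomial (Fin n) k)) f) = f := by
      intro u v huv f
      have hc : ((aeval fun l => ∑ m, v l m • (X m : MvPolynomial (Fin n) k)) :
            MvPolynomial (Fin n) k →ₐ[k] MvPolynomial (Fin n) k).comp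
          (aeval fun l => ∑ m, u l m • (X m : MvPolynomial (Fin n) k)) =
          AlgHom.id k (MvPolynomial (Fin n) k) := by
        apply MvPolynomial.algHom_ext
        intro i
        simp only [AlgHom.comp_apply, aeval_X, AlgHom.id_apply]
        exact my_lin_comp u v huv i
      exact AlgHom.congr_fun hc f
    have hmulam : ∀ r, mu (lam r) = r := by
      intro r
      obtain ⟨f, rfl⟩ := Ideal.Quotient.mk_surjective r
      rw [hlam, hmu, hcomp b a hba f]
    have hlammu : ∀ r, lam (mu r) = r := by
      intro r
      obtain ⟨f, rfl⟩ := Ideal.Quotient.mk_surjective r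
      rw [hmu, hlam, hcomp a b hab f]
    have hlambij : Function.Bijective lam :=
      Function.bijective_iff_has_inverse.2 ⟨mu, hmulam, hlammu⟩
    set T := lam.comp σ with hTdef
    have hgen : ∀ r : MvPolynomial (Fin n) k ⧸ I, ∃ c : k,
        r - algebraMap k _ c ∈
          Ideal.span (Set.range fun i : Fin n => Ideal.Quotient.mk I (X i)) := by
      intro r
      obtain ⟨f, rfl⟩ := Ideal.Quotient.mk_surjective r
      refine ⟨constantCoeff f, ?_⟩
      have heq : Ideal.Quotient.mk I f - algebraMap k _ (constantCoeff f) =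
          Ideal.Quotient.mk I (f - C (constantCoeff f)) := by
        rw [map_sub, ← MvPolynomial.algebraMap_eq, Ideal.Quotient.mk_algebraMap]
      rw [heq, myJ_eq_map]
      exact Ideal.mem_map_of_mem _ (my_mem_span_X _ (by simp))
    have hTJ : ∀ x ∈ Ideal.span (Set.range fun i : Fin n => Ideal.Quotient.mk I (X i)),
        T x ∈ Ideal.span (Set.range fun i : Fin n => Ideal.Quotient.mk I (X i)) := by
      intro x hx
      exact myNil_mem hs I hI _
        (IsNilpotent.map (mem_nilradical.mp (myJ_le_nilradical hs I hI hx)) T)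
    have hT : ∀ i, T (Ideal.Quotient.mk I (X i)) - Ideal.Quotient.mk I (X i) ∈
        (Ideal.span (Set.range fun i : Fin n => Ideal.Quotient.mk I (X i))) ^ 2 := by
      intro i
      have hTX : T (Ideal.Quotient.mk I (X i)) = Ideal.Quotient.mk I
          (aeval (fun l => ∑ m, b l m • (X m : MvPolynomial (Fin n) k)) (P i)) := by
        rw [hTdef, AlgHom.comp_apply, ← hPmk i, hlam]
      have hcc : constantCoeff (P i) = 0 := myspan_cc _ (hPm i)
      have hTay : P i - ∑ l, a i l • (X l : MvPolynomial (Fin n) k) ∈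
          (Ideal.span (Set.range (X : Fin n → MvPolynomial (Fin n) k))) ^ 2 := by
        refine my_taylor _ ?_ ?_
        · rw [coeff_sub, my_coeff_lin0, sub_zero]
          exact hcc
        · intro j
          rw [coeff_sub, my_coeff_lin1, ← my_cc_pderiv]
          simp [ha]
      have hmap2 : aeval (fun l => ∑ m, b l m • (X m : MvPolynomial (Fin n) k))
          (P i - ∑ l, a i l • (X l : MvPolynomial (Fin n) k)) ∈
          (Ideal.span (Set.range (X : Fin n → MvPolynomial (Fin n) k))) ^ 2 := by
        refine my_map_pow_span _
          ((aeval fun l => ∑ m, b l m • (X m : MvPolynomial (Fin n) k)).toRingHom) ?_ 2 _ hTay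
        rintro _ ⟨l, rfl⟩
        show aeval (fun l => ∑ m, b l m • (X m : MvPolynomial (Fin n) k)) (X l) ∈ _
        rw [aeval_X]
        refine Ideal.sum_mem _ fun m _ => ?_
        rw [MvPolynomial.smul_eq_C_mul]
        exact Ideal.mul_mem_left _ _ (Ideal.subset_span (Set.mem_range_self m))
      have hlin : aeval (fun l => ∑ m, b l m • (X m : MvPolynomial (Fin n) k))
          (∑ l, a i l • (X l : MvPolynomial (Fin n) k)) = X i := my_lin_comp a b hab i
      have hfinal : T (Ideal.Quotient.mk I (X i)) - Ideal.Quotient.mk I (X i) =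
          Ideal.Quotient.mk I (aeval (fun l => ∑ m, b l m • (X m : MvPolynomial (Fin n) k))
            (P i - ∑ l, a i l • (X l : MvPolynomial (Fin n) k))) := by
        rw [hTX, map_sub, hlin, map_sub]
      rw [hfinal, myJ_eq_map, ← Ideal.map_pow]
      exact Ideal.mem_map_of_mem _ hmap2
    have hTbij : Function.Bijective T :=
      my_unipotent T (fun i => Ideal.Quotient.mk I (X i)) hgen hT hTJ (myJ_nilpotent hs I hI)
    constructor
    · intro x y hxy
      refine hTbij.injective ?_
      rw [hTdef]
      simp only [AlgHom.comp_apply]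
      rw [hxy]
    · intro r
      obtain ⟨x, hx⟩ := hTbij.surjective (lam r)
      refine ⟨x, hlambij.injective ?_⟩
      rw [hTdef] at hx
      simpa using hx
end

section
/- Let F be an algebraically closed field of characteristic 0 and Φ: F^n → F^n a polynomial map whose Jacobian determinant is a nonzero constant. For every point d ∈ F^n, the fiber Φ^{-1}(d) is a finite set (the variety defined by Φ_1 - d_1, ..., Φ_n - d_n has dimension zero). -/
set_option maxHeartbeats 1000000
set_option synthInstance.maxHeartbeats 400000

open MvPolynomial

namespace Stmt17Aux

variable {F : Type*} [Field F] {n : ℕ}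

/-- The maximal ideal of polynomials vanishing linearly at `a`. -/
noncomputable def Ma (a : Fin n → F) : Ideal (MvPolynomial (Fin n) F) :=
  Ideal.span (Set.range fun j => X j - C (a j))

lemma X_sub_C_mem (a : Fin n → F) (j : Fin n) : X j - C (a j) ∈ Ma a :=
  Ideal.subset_span ⟨j, rfl⟩

lemma eval_eq_zero_of_mem {a : Fin n → F} {p : MvPolynomial (Fin n) F}
    (hp : p ∈ Ma a) : eval a p = 0 := by
  have h : Ma a ≤ RingHom.ker (eval a) := by
    rw [Ma, Ideal.span_le]
    rintro _ ⟨j, rfl⟩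
    simp [RingHom.mem_ker]
  simpa [RingHom.mem_ker] using h hp

/-- First-order Taylor expansion: the remainder lies in `(Ma a)^2`. -/
lemma taylor_mem (a : Fin n → F) (p : MvPolynomial (Fin n) F) :
    p - C (eval a p) - ∑ j, C (eval a (pderiv j p)) * (X j - C (a j)) ∈ Ma a * Ma a := by
  induction p using MvPolynomial.induction_on with
  | C r => simp
  | add p q hp hq =>
      have key : (p + q) - C (eval a (p + q)) -
          ∑ j, C (eval a (pderiv j (p + q))) * (X j - C (a j)) =
          (p - C (eval a p) - ∑ j, C (eval a (pderiv j p)) * (X j - C (a j))) +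
          (q - C (eval a q) - ∑ j, C (eval a (pderiv j q)) * (X j - C (a j))) := by
        simp only [map_add, add_mul, Finset.sum_add_distrib]
        ring
      rw [key]
      exact Ideal.add_mem _ hp hq
  | mul_X p k hp =>
      have hL : ∀ j, pderiv j (p * X k) = pderiv j p * X k + p * pderiv j (X k) := by
        intro j; exact pderiv_mul
      have hsum : (∑ j, C (eval a (pderiv j (p * X k))) * (X j - C (a j)))
          = C (a k) * (∑ j, C (eval a (pderiv j p)) * (X j - C (a j)))
            + C (eval a p) * (X k - C (a k)) := by
        have step : ∀ j : Fin n, C (eval a (pderiv j (p * X k))) * (X j - C (a j))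
            = C (a k) * (C (eval a (pderiv j p)) * (X j - C (a j)))
              + (if k = j then C (eval a p) * (X j - C (a j)) else 0) := by
          intro j
          rw [hL j, pderiv_X, Pi.single_apply]
          split <;> rename_i h
          · subst h; simp only [map_add, map_mul, eval_X, map_one, mul_one]; ring
          · simp only [map_add, map_mul, eval_X, map_zero, mul_zero, add_zero]
            ring
        rw [Finset.sum_congr rfl (fun j _ => step j), Finset.sum_add_distrib,
          Finset.sum_ite_eq, Finset.mul_sum]
        simp
      have key : p * X k - C (eval a (p * X k)) -
          ∑ j, C (eval a (pderiv j (p * X k))) * (X j - C (a j)) =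
          (∑ j, C (eval a (pderiv j p)) * (X j - C (a j))) * (X k - C (a k)) +
          (p - C (eval a p) - ∑ j, C (eval a (pderiv j p)) * (X j - C (a j))) * X k := by
        rw [hsum, map_mul, eval_X]
        push_cast [map_mul]
        ring
      rw [key]
      refine Ideal.add_mem _ (Ideal.mul_mem_mul ?_ (X_sub_C_mem a k)) (Ideal.mul_mem_right _ _ hp)
      exact Ideal.sum_mem _ fun j _ => Ideal.mul_mem_left _ _ (X_sub_C_mem a j)

lemma sub_C_eval_mem (a : Fin n → F) (p : MvPolynomial (Fin n) F) :
    p - C (eval a p) ∈ Ma a := by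
  have h1 := taylor_mem a p
  have h2 : p - C (eval a p) =
      (p - C (eval a p) - ∑ j, C (eval a (pderiv j p)) * (X j - C (a j))) +
      ∑ j, C (eval a (pderiv j p)) * (X j - C (a j)) := by ring
  rw [h2]
  exact Ideal.add_mem _ (Ideal.mul_le_left h1)
    (Ideal.sum_mem _ fun j _ => Ideal.mul_mem_left _ _ (X_sub_C_mem a j))

lemma Ma_eq_ker (a : Fin n → F) :
    Ma a = RingHom.ker (eval a : MvPolynomial (Fin n) F →+* F) := by
  refine le_antisymm ?_ ?_
  · intro p hp; simpa [RingHom.mem_ker] using eval_eq_zero_of_mem hp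
  · intro p hp
    rw [RingHom.mem_ker] at hp
    have := sub_C_eval_mem a p
    rwa [hp, map_zero, sub_zero] at this

instance Ma_isPrime (a : Fin n → F) : (Ma a).IsPrime := by
  rw [Ma_eq_ker]
  exact RingHom.ker_isPrime _


lemma Ma_injective : Function.Injective (Ma : (Fin n → F) → Ideal (MvPolynomial (Fin n) F)) := by
  intro a b h
  funext j
  have h1 : X j - C (a j) ∈ Ma b := h ▸ X_sub_C_mem a j
  have h2 := eval_eq_zero_of_mem h1
  simp only [map_sub, eval_X, eval_C, sub_eq_zero] at h2
  exact h2.symm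

end Stmt17Aux

open Stmt17Aux in
/-- For `F` algebraically closed of characteristic `0` and a polynomial map
`Φ : Fⁿ → Fⁿ` (components `Φᵢ ∈ F[x₁,…,xₙ]`) whose Jacobian determinant is a nonzero
constant, every fiber `Φ⁻¹(d)` is finite. -/
theorem stmt_17 (F : Type*) [Field F] [IsAlgClosed F] [CharZero F] (n : ℕ)
    (Φ : Fin n → MvPolynomial (Fin n) F)
    (hJ : ∃ c : F, c ≠ 0 ∧
      Matrix.det (Matrix.of fun i j : Fin n => pderiv j (Φ i)) = C c)
    (d : Fin n → F) :
    {x : Fin n → F | ∀ i, eval x (Φ i) = d i}.Finite := by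
  classical
  obtain ⟨c, hc, hdet⟩ := hJ
  let J : Ideal (MvPolynomial (Fin n) F) := Ideal.span (Set.range fun i => Φ i - C (d i))
  have hJfin : J.minimalPrimes.Finite := by
    rw [Ideal.minimalPrimes_eq_comap]
    exact (minimalPrimes.finite_of_isNoetherianRing (MvPolynomial (Fin n) F ⧸ J)).image _
  have hJmem : ∀ i, Φ i - C (d i) ∈ J := fun i => Ideal.subset_span ⟨i, rfl⟩
  -- key step
  have key : ∀ a ∈ {x : Fin n → F | ∀ i, eval x (Φ i) = d i}, Ma a ∈ J.minimalPrimes := by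
    intro a ha
    simp only [Set.mem_setOf_eq] at ha
    -- the Jacobian matrix at a
    set cm : Matrix (Fin n) (Fin n) F := Matrix.of fun i j => eval a (pderiv j (Φ i)) with hcm
    have hdetcm : cm.det = c := by
      have h1 := congrArg (eval a) hdet
      rw [RingHom.map_det, eval_C] at h1
      rw [← h1]
      congr 1
    have hUnit : IsUnit cm.det := by rw [hdetcm]; exact hc.isUnit
    have hBc : cm⁻¹ * cm = 1 := Matrix.nonsing_inv_mul cm hUnit
    set B := cm⁻¹ with hB
    -- Taylor remainders
    have hE : ∀ i, Φ i - C (d i) - ∑ k, C (cm i k) * (X k - C (a k)) ∈ Ma a * Ma a := by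
      intro i
      have h1 := taylor_mem a (Φ i)
      rwa [ha i] at h1
    -- J ≤ Ma a
    have hJM : J ≤ Ma a := by
      rw [Ideal.span_le]
      rintro _ ⟨i, rfl⟩
      show Φ i - C (d i) ∈ Ma a
      have h2 : Φ i - C (d i) =
          (Φ i - C (d i) - ∑ k, C (cm i k) * (X k - C (a k))) +
          ∑ k, C (cm i k) * (X k - C (a k)) := by ring
      rw [h2]
      exact Ideal.add_mem _ (Ideal.mul_le_left (hE i))
        (Ideal.sum_mem _ fun k _ => Ideal.mul_mem_left _ _ (X_sub_C_mem a k))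
    -- generators of Ma a lie in J ⊔ Ma a * Ma a
    have hgen : Ma a ≤ J ⊔ Ma a * Ma a := by
      rw [Ma, Ideal.span_le]
      rintro _ ⟨j, rfl⟩
      show X j - C (a j) ∈ J ⊔ Ma a * Ma a
      have hcollapse : (∑ i, C (B j i) * ∑ k, C (cm i k) * (X k - C (a k)))
          = X j - C (a j) := by
        have h3 : (∑ i, C (B j i) * ∑ k, C (cm i k) * (X k - C (a k)))
            = ∑ k, C ((B * cm) j k) * (X k - C (a k)) := by
          simp only [Finset.mul_sum, Matrix.mul_apply, map_sum, Finset.sum_mul]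
          rw [Finset.sum_comm]
          exact Finset.sum_congr rfl fun k _ => Finset.sum_congr rfl fun i _ => by
            rw [map_mul]; ring
        rw [h3, hBc]
        simp [Matrix.one_apply, apply_ite]
      have hkey : X j - C (a j) =
          (∑ i, C (B j i) * (Φ i - C (d i))) +
          ∑ i, C (B j i) * (∑ k, C (cm i k) * (X k - C (a k)) - (Φ i - C (d i))) := by
        rw [← Finset.sum_add_distrib, ← hcollapse]
        exact Finset.sum_congr rfl fun i _ => by ring
      rw [hkey]
      refine Ideal.add_mem _ (Ideal.mem_sup_left ?_) (Ideal.mem_sup_right ?_)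
      · exact Ideal.sum_mem _ fun i _ => Ideal.mul_mem_left _ _ (hJmem i)
      · refine Ideal.sum_mem _ fun i _ => Ideal.mul_mem_left _ _ ?_
        have h4 : (∑ k, C (cm i k) * (X k - C (a k))) - (Φ i - C (d i)) =
            -(Φ i - C (d i) - ∑ k, C (cm i k) * (X k - C (a k))) := by ring
        rw [h4]
        exact neg_mem (hE i)
    -- Nakayama: get f with eval a f = 1 and f * (Ma a) ≤ J
    obtain ⟨f, hfa, hfJ⟩ :
        ∃ f : MvPolynomial (Fin n) F, eval a f = 1 ∧ ∀ m ∈ Ma a, f * m ∈ J := by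
      set π := Ideal.Quotient.mk J with hπ
      have hFG : ((Ma a).map π).FG := by
        refine Ideal.FG.map ?_ π
        rw [Ma]
        exact Submodule.fg_span (Set.finite_range _)
      have hle : (Ma a).map π ≤ ((Ma a).map π) • ((Ma a).map π) := by
        rw [smul_eq_mul, ← Ideal.map_mul]
        calc (Ma a).map π ≤ (J ⊔ Ma a * Ma a).map π := Ideal.map_mono hgen
          _ = J.map π ⊔ (Ma a * Ma a).map π := Ideal.map_sup _ _ _
          _ = (Ma a * Ma a).map π := by rw [Ideal.map_quotient_self, bot_sup_eq]
      obtain ⟨r, hr1, hr2⟩ :=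
        Submodule.exists_sub_one_mem_and_smul_eq_zero_of_fg_of_le_smul
          ((Ma a).map π) ((Ma a).map π) hFG hle
      obtain ⟨g, hg, hgr⟩ := (Ideal.mem_map_iff_of_surjective π
        Ideal.Quotient.mk_surjective).1 hr1
      refine ⟨1 + g, by simp [eval_eq_zero_of_mem hg], fun m hm => ?_⟩
      have h5 : π ((1 + g) * m) = r * π m := by
        rw [map_mul, map_add, map_one, hgr]; ring
      have h6 : r • π m = 0 := hr2 _ (Ideal.mem_map_of_mem _ hm)
      rw [smul_eq_mul] at h6
      rw [← Ideal.Quotient.eq_zero_iff_mem, h5, h6]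
    have hfnot : f ∉ Ma a := fun h => by
      have := eval_eq_zero_of_mem h; rw [hfa] at this; exact one_ne_zero this
    -- Ma a is a minimal prime over J
    refine ⟨⟨Ma_isPrime a, hJM⟩, ?_⟩
    rintro q ⟨hq, hJq⟩ hqM
    rw [Ma, Ideal.span_le]
    rintro _ ⟨j, rfl⟩
    show X j - C (a j) ∈ q
    have h7 : f * (X j - C (a j)) ∈ q := hJq (hfJ _ (X_sub_C_mem a j))
    rcases hq.mem_or_mem h7 with h | h
    · exact absurd (hqM h) hfnot
    · exact h
  have himg : (Ma '' {x : Fin n → F | ∀ i, eval x (Φ i) = d i}).Finite :=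
    hJfin.subset (by rintro _ ⟨a, ha, rfl⟩; exact key a ha)
  exact Set.Finite.of_finite_image himg Ma_injective.injOn
end

section
/- Let k be a field of characteristic p > 0 and R_s = k[x_1,...,x_n]/⟨x_1^p,...,x_n^p⟩^{p^{s-1}} with m̄ the ideal generated by the images of the variables. Every k-algebra endomorphism σ of R_s with σ(x̄_i) = x̄_i + v_i for some v_i ∈ m̄^2 and det(J(σ)) invertible is an automorphism. -/
open MvPolynomial

set_option maxHeartbeats 1000000
set_option synthInstance.maxHeartbeats 400000

/-- For `k` a field of characteristic `p > 0` and
`R_s = k[x₁,…,xₙ]/⟨x₁^p,…,xₙ^p⟩^{p^{s-1}}` with `m̄` the ideal generated by the images of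
the variables: every `k`-algebra endomorphism `σ` of `R_s` with `σ(x̄ᵢ) = x̄ᵢ + vᵢ` for
some `vᵢ ∈ m̄²`, whose Jacobian determinant (via lifts) is invertible, is an
automorphism. -/
theorem stmt_19 (k : Type*) [Field k] (p : ℕ) [Fact p.Prime] [CharP k p]
    (n s : ℕ) (hs : 1 ≤ s) (I : Ideal (MvPolynomial (Fin n) k))
    (hI : I = (Ideal.span (Set.range fun i : Fin n =>
      (X i : MvPolynomial (Fin n) k) ^ p)) ^ (p ^ (s - 1)))
    (σ : (MvPolynomial (Fin n) k ⧸ I) →ₐ[k] (MvPolynomial (Fin n) k ⧸ I))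
    (v : Fin n → (MvPolynomial (Fin n) k ⧸ I))
    (hv : ∀ i, v i ∈ (Ideal.span (Set.range fun i : Fin n =>
      Ideal.Quotient.mk I (X i))) ^ 2)
    (hσ : ∀ i, σ (Ideal.Quotient.mk I (X i)) = Ideal.Quotient.mk I (X i) + v i)
    (hJ : ∀ P : Fin n → MvPolynomial (Fin n) k,
      (∀ i, Ideal.Quotient.mk I (P i) = σ (Ideal.Quotient.mk I (X i))) →
      IsUnit (Matrix.det
        (Matrix.of fun i j : Fin n => Ideal.Quotient.mk I (pderiv j (P i))))) :
    Function.Bijective σ := by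
  classical
  set m : Ideal (MvPolynomial (Fin n) k ⧸ I) := Ideal.span (Set.range fun i : Fin n =>
      Ideal.Quotient.mk I (X i)) with hmdef
  have hp : 0 < p := (Fact.out : p.Prime).pos
  -- generators are nilpotent
  have hxnil : ∀ i : Fin n, (Ideal.Quotient.mk I (X i)) ^ (p ^ s) = 0 := by
    intro i
    have h1 : (X i : MvPolynomial (Fin n) k) ^ (p ^ s) ∈ I := by
      rw [hI]
      have hps : p ^ s = p * p ^ (s - 1) := by
        conv_lhs => rw [show s = (s - 1) + 1 by omega]
        rw [pow_succ']
      rw [hps, pow_mul]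
      exact Ideal.pow_mem_pow (Ideal.subset_span (Set.mem_range_self i)) _
    rw [← map_pow, Ideal.Quotient.eq_zero_iff_mem]
    exact h1
  -- m is nilpotent
  have hfg : m.FG := Submodule.fg_span (Set.finite_range _)
  have hle : m ≤ (⊥ : Ideal (MvPolynomial (Fin n) k ⧸ I)).radical := by
    rw [hmdef, Ideal.span_le]
    rintro _ ⟨i, rfl⟩
    rw [SetLike.mem_coe, Ideal.mem_radical_iff]
    exact ⟨p ^ s, by simp [hxnil i]⟩
  obtain ⟨N, hN⟩ := Ideal.exists_pow_le_of_le_radical_of_fg hle hfg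
  have hmN : m ^ N = ⊥ := le_bot_iff.mp hN
  -- v i ∈ m
  have hvm : ∀ i, v i ∈ m := fun i => Ideal.pow_le_self (by norm_num) (hv i)
  -- σ preserves powers of m
  have hσm : ∀ (j : ℕ) (y : MvPolynomial (Fin n) k ⧸ I), y ∈ m ^ j → σ y ∈ m ^ j := by
    have h1 : Ideal.map σ.toRingHom m ≤ m := by
      rw [hmdef, Ideal.map_span, Ideal.span_le]
      rintro _ ⟨_, ⟨i, rfl⟩, rfl⟩
      show σ (Ideal.Quotient.mk I (X i)) ∈ m
      rw [hσ i]
      exact add_mem (Ideal.subset_span ⟨i, rfl⟩) (hvm i)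
    intro j y hy
    have h2 := Ideal.mem_map_of_mem σ.toRingHom hy
    rw [Ideal.map_pow] at h2
    exact Ideal.pow_right_mono h1 j h2
  -- adjoin of variables is everything
  have htop : Algebra.adjoin k (Set.range fun i : Fin n =>
      Ideal.Quotient.mk I (X i)) = ⊤ := by
    have h1 : (Set.range fun i : Fin n => Ideal.Quotient.mk I (X i))
        = (Ideal.Quotient.mkₐ k I) '' (Set.range X) := by
      rw [← Set.range_comp]; rfl
    rw [h1, ← AlgHom.map_adjoin, MvPolynomial.adjoin_range_X, Algebra.map_top]
    exact (AlgHom.range_eq_top _).mpr (Ideal.Quotient.mkₐ_surjective k I)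
  -- P0
  have P0 : ∀ r : MvPolynomial (Fin n) k ⧸ I, σ r - r ∈ m := by
    intro r
    have hr : r ∈ Algebra.adjoin k (Set.range fun i : Fin n =>
        Ideal.Quotient.mk I (X i)) := htop ▸ Algebra.mem_top
    induction hr using Algebra.adjoin_induction with
    | mem x hx =>
      obtain ⟨i, rfl⟩ := hx
      rw [hσ i, add_sub_cancel_left]
      exact hvm i
    | algebraMap c => simp
    | add a b ha hb iha ihb =>
      have : σ (a + b) - (a + b) = (σ a - a) + (σ b - b) := by
        rw [map_add]; ring
      rw [this]; exact add_mem iha ihb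
    | mul a b ha hb iha ihb =>
      have : σ (a * b) - a * b = (σ a - a) * σ b + a * (σ b - b) := by
        rw [map_mul]; ring
      rw [this]
      exact add_mem (Ideal.mul_mem_right _ _ iha) (Ideal.mul_mem_left _ _ ihb)
  -- P1
  have P1 : ∀ a ∈ m, σ a - a ∈ m ^ 2 := by
    intro a ha
    rw [hmdef] at ha
    induction ha using Submodule.span_induction with
    | mem x hx =>
      obtain ⟨i, rfl⟩ := hx
      rw [hσ i, add_sub_cancel_left]
      exact hv i
    | zero => simp
    | add a b ha hb iha ihb =>
      have : σ (a + b) - (a + b) = (σ a - a) + (σ b - b) := by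
        rw [map_add]; ring
      rw [this]; exact add_mem iha ihb
    | smul r x hx ihx =>
      have h1 : σ (r • x) - r • x = σ r * (σ x - x) + (σ r - r) * x := by
        rw [smul_eq_mul, map_mul]; ring
      rw [h1]
      refine add_mem (Ideal.mul_mem_left _ _ ihx) ?_
      rw [sq]
      exact Ideal.mul_mem_mul (P0 r) hx
  -- Pj
  have Pj : ∀ (j : ℕ), ∀ a ∈ m ^ j, σ a - a ∈ m ^ (j + 1) := by
    intro j
    induction j with
    | zero => intro a _; simpa using P0 a
    | succ j ih =>
      intro a ha
      rw [pow_succ m j] at ha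
      refine Submodule.mul_induction_on ha ?_ ?_
      · intro c hc b hb
        have h1 : σ (c * b) - c * b = (σ c - c) * σ b + c * (σ b - b) := by
          rw [map_mul]; ring
        rw [h1]
        refine add_mem ?_ ?_
        · rw [pow_succ m (j + 1)]
          exact Ideal.mul_mem_mul (ih c hc) (by simpa using hσm 1 b (by simpa using hb))
        · have h2 : m ^ j * m ^ 2 = m ^ (j + 1 + 1) := by
            rw [← pow_add m j 2]
          rw [← h2]
          exact Ideal.mul_mem_mul hc (P1 b hb)
      · intro x y hx hy
        have : σ (x + y) - (x + y) = (σ x - x) + (σ y - y) := by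
          rw [map_add]; ring
        rw [this]; exact add_mem hx hy
  -- surjectivity via downward induction
  have key : ∀ (d j : ℕ), N ≤ j + d → ∀ a ∈ m ^ j, ∃ b ∈ m ^ j, σ b = a := by
    intro d
    induction d with
    | zero =>
      intro j hj a ha
      have h1 : m ^ j ≤ m ^ N := Ideal.pow_le_pow_right (by omega)
      have h2 : a = 0 := by
        have := h1 ha
        rw [hmN] at this
        simpa using this
      exact ⟨0, zero_mem _, by simp [h2]⟩
    | succ d ih =>
      intro j hj a ha
      obtain ⟨b', hb', hb'2⟩ := ih (j + 1) (by omega) _ (Pj j a ha)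
      refine ⟨a - b', sub_mem ha (Ideal.pow_le_pow_right (by omega) hb'), ?_⟩
      rw [map_sub, hb'2]
      ring
  have hsurj : Function.Surjective σ := by
    intro a
    obtain ⟨b, _, hb⟩ := key N 0 (by omega) a (by simp)
    exact ⟨b, hb⟩
  refine ⟨?_, hsurj⟩
  -- injectivity via Noetherian kernel chain
  haveI hnoe : IsNoetherianRing (MvPolynomial (Fin n) k ⧸ I) := by
    exact inferInstance
  let f : (MvPolynomial (Fin n) k ⧸ I) →+* (MvPolynomial (Fin n) k ⧸ I) := σ.toRingHom
  have hfs : ∀ t : ℕ, Function.Surjective (f ^ t) := by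
    intro t
    induction t with
    | zero => simpa using Function.surjective_id
    | succ t ih =>
      rw [pow_succ]
      intro y
      obtain ⟨z, hz⟩ := ih y
      obtain ⟨w, hw⟩ := hsurj z
      refine ⟨w, ?_⟩
      rw [RingHom.mul_def, RingHom.comp_apply, show f w = z from hw, hz]
  have hmono : Monotone (fun t : ℕ => RingHom.ker (f ^ t)) := by
    intro a b hab
    intro x hx
    rw [RingHom.mem_ker] at hx ⊢
    have : f ^ b = f ^ (b - a) * f ^ a := by rw [← pow_add]; congr 1; omega
    rw [this, RingHom.mul_def, RingHom.comp_apply, hx, map_zero]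
  obtain ⟨t, ht⟩ := monotone_stabilizes_iff_noetherian.mpr hnoe
    (⟨fun t : ℕ => RingHom.ker (f ^ t), hmono⟩ : ℕ →o Ideal (MvPolynomial (Fin n) k ⧸ I))
  rw [injective_iff_map_eq_zero]
  intro x hx
  obtain ⟨y, hy⟩ := hfs t x
  have h1 : (f ^ (t + 1)) y = 0 := by
    rw [pow_succ', RingHom.mul_def, RingHom.comp_apply, hy]
    exact hx
  have h2 : y ∈ RingHom.ker (f ^ t) := by
    have h4 := ht (t + 1) (by omega)
    simp only [OrderHom.coe_mk] at h4
    have h3 : y ∈ RingHom.ker (f ^ (t + 1)) := h1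
    rw [← h4] at h3
    exact h3
  rw [← hy]
  exact h2
end
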